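/- arXiv:0907.5302 — 5 statements merged into one kernel-verified Lean document; each statement's English description precedes it below -/
import Mathlib

section
/- Let K ≥ 1 be a real number, let (μ_n) be a sequence of Borel probability measures on the interval [0, K] converging weakly to a Borel probability measure μ on [0, K], and suppose that for every n the limit c(μ_n) := lim_{ε→0⁺} ∫_{(ε,K]} log λ dμ_n(λ) exists and satisfies c(μ_n) ≥ 0. Then lim_{n→∞} μ_n({0}) = μ({0}). -/
open MeasureTheory Filter Set

lemma intlog (m : Measure ℝ) [IsFiniteMeasure m] {a b : ℝ} (ha : 0 < a) :
    IntegrableOn Real.log (Ioc a b) m := by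
  rcases le_or_gt b a with h | h
  · simp [Ioc_eq_empty (not_lt.mpr h)]
  · have hcont : ContinuousOn Real.log (Icc a b) := fun x hx =>
      (Real.continuousAt_log (by nlinarith [hx.1] : x ≠ 0)).continuousWithinAt
    exact (hcont.integrableOn_compact isCompact_Icc).mono_set Ioc_subset_Icc_self

lemma sup_Ioc (m : Measure ℝ) [IsFiniteMeasure m] {δ C : ℝ} (hC : 0 ≤ C) (hδ : 0 < δ)
    (h : ∀ η, 0 < η → η < δ → (m (Ioc η δ)).toReal ≤ C) : (m (Ioc 0 δ)).toReal ≤ C := by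
  set s : ℕ → Set ℝ := fun k => Ioc (δ / (k + 2)) δ with hs
  have hmono : Monotone s := by
    intro k l hkl
    apply Ioc_subset_Ioc_left
    apply div_le_div_of_nonneg_left hδ.le (by positivity)
    exact_mod_cast Nat.add_le_add_right hkl 2
  have hU : Ioc 0 δ = ⋃ k, s k := by
    ext x
    simp only [mem_iUnion, hs, mem_Ioc]
    constructor
    · rintro ⟨hx0, hxδ⟩
      obtain ⟨k, hk⟩ := exists_nat_gt (δ / x)
      exact ⟨k, by rw [div_lt_iff₀ (by positivity)]; nlinarith [(div_lt_iff₀ hx0).mp hk], hxδ⟩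
    · rintro ⟨k, hk1, hk2⟩
      exact ⟨lt_trans (by positivity) hk1, hk2⟩
  have hd : Directed (· ⊆ ·) s := hmono.directed_le
  have := hd.measure_iUnion (μ := m)
  rw [hU]
  rw [this]  -- measure of union = iSup
  refine ENNReal.toReal_le_of_le_ofReal hC (iSup_le fun k => ?_)
  have hk2 : δ / ((k : ℝ) + 2) < δ := by
    rw [div_lt_iff₀ (by positivity)]; nlinarith
  have := h (δ / (k + 2)) (by positivity) hk2
  exact (ENNReal.le_ofReal_iff_toReal_le (measure_ne_top _ _) hC).mpr this

lemma massA (K : ℝ) (hK : 1 ≤ K) (m : Measure ℝ) [IsProbabilityMeasure m]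
    (c : ℝ) (hc : Tendsto (fun ε : ℝ => ∫ x in Ioc ε K, Real.log x ∂m)
      (nhdsWithin 0 (Ioi 0)) (nhds c))
    (hc0 : 0 ≤ c) {δ : ℝ} (hδ0 : 0 < δ) (hδ1 : δ < 1) :
    (m (Ioc 0 δ)).toReal ≤ Real.log K / (-Real.log δ) := by
  have hlogδ : Real.log δ < 0 := Real.log_neg hδ0 hδ1
  have hlogK : 0 ≤ Real.log K := Real.log_nonneg hK
  have hδK : δ ≤ K := by linarith
  refine sup_Ioc m (div_nonneg hlogK (by linarith)) hδ0 (fun η hη0 hηδ => ?_)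
  -- show c ≤ log δ * (m (Ioc η δ)).toReal + log K
  have key : c ≤ Real.log δ * (m (Ioc η δ)).toReal + Real.log K := by
    refine le_of_tendsto hc ?_
    filter_upwards [Ioo_mem_nhdsGT_of_mem (left_mem_Ico.mpr hη0)] with ε hε
    obtain ⟨hε0, hεη⟩ := hε
    have hεδ : ε ≤ δ := le_of_lt (hεη.trans hηδ)
    have hsplit : Ioc ε K = Ioc ε δ ∪ Ioc δ K := (Ioc_union_Ioc_eq_Ioc hεδ hδK).symm
    have hdisj : Disjoint (Ioc ε δ) (Ioc δ K) :=
      disjoint_left.mpr (fun x hx hx' => absurd hx.2 (not_le.mpr hx'.1))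
    have hi1 : IntegrableOn Real.log (Ioc ε δ) m := intlog m hε0
    have hi2 : IntegrableOn Real.log (Ioc δ K) m := intlog m hδ0
    rw [hsplit, setIntegral_union hdisj measurableSet_Ioc hi1 hi2]
    have b1 : ∫ x in Ioc ε δ, Real.log x ∂m ≤ Real.log δ * (m (Ioc ε δ)).toReal := by
      have := setIntegral_mono_on hi1 (integrableOn_const (measure_ne_top _ _))
        measurableSet_Ioc (fun x hx => Real.log_le_log (hε0.trans hx.1) hx.2)
      simpa [setIntegral_const, mul_comm, measureReal_def] using this
    have b1' : Real.log δ * (m (Ioc ε δ)).toReal ≤ Real.log δ * (m (Ioc η δ)).toReal := by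
      apply mul_le_mul_of_nonpos_left _ hlogδ.le
      exact ENNReal.toReal_le_toReal (measure_ne_top _ _) (measure_ne_top _ _) |>.mpr
        (measure_mono (Ioc_subset_Ioc_left hεη.le))
    have b2 : ∫ x in Ioc δ K, Real.log x ∂m ≤ Real.log K := by
      have h1 : ∫ x in Ioc δ K, Real.log x ∂m ≤ Real.log K * (m (Ioc δ K)).toReal := by
        have := setIntegral_mono_on hi2 (integrableOn_const (measure_ne_top _ _))
          measurableSet_Ioc (fun x hx => Real.log_le_log (hδ0.trans hx.1) hx.2)
        simpa [setIntegral_const, mul_comm, measureReal_def] using this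
      have h2 : (m (Ioc δ K)).toReal ≤ 1 := by
        have := prob_le_one (μ := m) (s := Ioc δ K)
        simpa using ENNReal.toReal_le_toReal (measure_ne_top _ _) (by simp) |>.mpr this
      nlinarith
    linarith
  rw [le_div_iff₀ (by linarith)]
  nlinarith [ENNReal.toReal_nonneg (a := m (Ioc η δ))]

lemma int_le_meas (m : Measure ℝ) [IsFiniteMeasure m] {h : ℝ → ℝ} {S : Set ℝ}
    (hS : MeasurableSet S) (hi : IntegrableOn h S m) (hb : ∀ x ∈ S, h x ≤ 1) :
    ∫ x in S, h x ∂m ≤ (m S).toReal := by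
  have := setIntegral_mono_on hi (integrableOn_const (measure_ne_top _ _)) hS hb
  simpa [setIntegral_const, measureReal_def] using this

lemma int_zero_meas (m : Measure ℝ) {h : ℝ → ℝ} {S : Set ℝ}
    (hS : MeasurableSet S) (hb : ∀ x ∈ S, h x = 0) :
    ∫ x in S, h x ∂m = 0 := by
  rw [setIntegral_congr_fun hS hb]; simp

lemma int_singleton (m : Measure ℝ) [IsFiniteMeasure m] {h : ℝ → ℝ} :
    ∫ x in ({0} : Set ℝ), h x ∂m = (m {0}).toReal * h 0 := by
  rw [setIntegral_congr_fun (measurableSet_singleton 0)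
    (fun x hx => by rw [mem_singleton_iff] at hx; rw [hx] : EqOn h (fun _ => h 0) {0}),
    setIntegral_const]
  simp [mul_comm, measureReal_def]

lemma icc_split (K δ : ℝ) (hδ0 : 0 < δ) (hδK : δ ≤ K) :
    Icc 0 K = {0} ∪ (Ioc 0 δ ∪ Ioc δ K) := by
  rw [Ioc_union_Ioc_eq_Ioc hδ0.le hδK]
  ext x
  simp only [mem_Icc, mem_union, mem_singleton_iff, mem_Ioc]
  constructor
  · rintro ⟨h1, h2⟩
    rcases eq_or_lt_of_le h1 with h | h
    · exact Or.inl h.symm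
    · exact Or.inr ⟨h, h2⟩
  · rintro (rfl | ⟨h1, h2⟩)
    · exact ⟨le_refl 0, hδ0.le.trans hδK⟩
    · exact ⟨h1.le, h2⟩

lemma atom_approx (K : ℝ) (m : Measure ℝ) [IsProbabilityMeasure m]
    {δ : ℝ} (hδ0 : 0 < δ) (hδK : δ ≤ K) :
    |(∫ x in Icc 0 K, max 0 (1 - x / δ) ∂m) - (m {0}).toReal| ≤ (m (Ioc 0 δ)).toReal := by
  set f : ℝ → ℝ := fun x => max 0 (1 - x / δ) with hf
  have hfc : Continuous f := continuous_const.max (continuous_const.sub (continuous_id.div_const δ))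
  have hi : IntegrableOn f (Icc 0 K) m :=
    hfc.continuousOn.integrableOn_compact isCompact_Icc
  have hdisj1 : Disjoint ({0} : Set ℝ) (Ioc 0 δ ∪ Ioc δ K) := by
    rw [Ioc_union_Ioc_eq_Ioc hδ0.le hδK]
    simp [disjoint_left]
  have hdisj2 : Disjoint (Ioc 0 δ) (Ioc δ K) :=
    disjoint_left.mpr (fun x hx hx' => absurd hx.2 (not_le.mpr hx'.1))
  have hsub1 : Ioc 0 δ ∪ Ioc δ K ⊆ Icc 0 K := by
    rw [Ioc_union_Ioc_eq_Ioc hδ0.le hδK]; exact Ioc_subset_Icc_self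
  have hsplit : ∫ x in Icc 0 K, f x ∂m =
      (m {0}).toReal * f 0 + ((∫ x in Ioc 0 δ, f x ∂m) + ∫ x in Ioc δ K, f x ∂m) := by
    rw [icc_split K δ hδ0 hδK,
      setIntegral_union hdisj1 (measurableSet_Ioc.union measurableSet_Ioc)
        (hi.mono_set (by rw [icc_split K δ hδ0 hδK]; exact subset_union_left))
        (hi.mono_set (by rw [icc_split K δ hδ0 hδK]; exact subset_union_right)),
      setIntegral_union hdisj2 measurableSet_Ioc
        (hi.mono_set ((subset_union_left).trans hsub1))
        (hi.mono_set ((subset_union_right).trans hsub1)),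
      int_singleton]
  have hf0 : f 0 = 1 := by simp [hf]
  have hzero : ∫ x in Ioc δ K, f x ∂m = 0 :=
    int_zero_meas m measurableSet_Ioc (fun x hx => by
      have : 1 - x / δ ≤ 0 := by
        have : (1 : ℝ) < x / δ := (one_lt_div hδ0).mpr hx.1
        linarith
      simp [hf, max_eq_left this])
  have hupper : ∫ x in Ioc 0 δ, f x ∂m ≤ (m (Ioc 0 δ)).toReal :=
    int_le_meas m measurableSet_Ioc (hi.mono_set ((subset_union_left).trans hsub1))
      (fun x hx => by
        have : 0 ≤ x / δ := div_nonneg hx.1.le hδ0.le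
        simp [hf]; linarith)
  have hlower : 0 ≤ ∫ x in Ioc 0 δ, f x ∂m :=
    setIntegral_nonneg measurableSet_Ioc (fun x _ => le_max_left _ _)
  rw [hsplit, hf0, hzero]
  rw [abs_le]
  constructor <;> [skip; skip] <;> simp only [mul_one] <;> linarith

lemma massB (K : ℝ) (hK : 1 ≤ K)
    (μ : ℕ → Measure ℝ) (ν : Measure ℝ)
    (hμprob : ∀ n, IsProbabilityMeasure (μ n))
    [IsProbabilityMeasure ν]
    (hweak : ∀ f : ℝ → ℝ, ContinuousOn f (Icc 0 K) →
      Tendsto (fun n => ∫ x in Icc 0 K, f x ∂(μ n)) atTop (nhds (∫ x in Icc 0 K, f x ∂ν)))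
    {δ C : ℝ} (hδ0 : 0 < δ) (hδ1 : 2 * δ < 1) (hC : 0 ≤ C)
    (hA : ∀ n, ((μ n) (Ioc 0 (2 * δ))).toReal ≤ C) :
    (ν (Ioc 0 δ)).toReal ≤ C := by
  have h2δK : 2 * δ ≤ K := by linarith
  have hδK : δ ≤ K := by linarith
  refine sup_Ioc ν hC hδ0 (fun η hη0 hηδ => ?_)
  set g : ℝ → ℝ := fun x => min 1 (min (x / η) (max 0 (2 - x / δ))) with hg
  have hgc : Continuous g :=
    continuous_const.min ((continuous_id.div_const η).min
      (continuous_const.max (continuous_const.sub (continuous_id.div_const δ))))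
  have hg0 : ∀ x, 0 ≤ x → 0 ≤ g x := fun x hx =>
    le_min zero_le_one (le_min (div_nonneg hx hη0.le) (le_max_left _ _))
  have hg1 : ∀ x, g x ≤ 1 := fun x => min_le_left _ _
  -- per-n bound
  have h2 : ∀ n, ∫ x in Icc 0 K, g x ∂(μ n) ≤ C := by
    intro n
    haveI := hμprob n
    have hi : IntegrableOn g (Icc 0 K) (μ n) :=
      hgc.continuousOn.integrableOn_compact isCompact_Icc
    have hsub1 : Ioc 0 (2 * δ) ∪ Ioc (2 * δ) K ⊆ Icc 0 K := by
      rw [Ioc_union_Ioc_eq_Ioc (by linarith) h2δK]; exact Ioc_subset_Icc_self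
    have hdisj1 : Disjoint ({0} : Set ℝ) (Ioc 0 (2 * δ) ∪ Ioc (2 * δ) K) := by
      rw [Ioc_union_Ioc_eq_Ioc (by linarith) h2δK]
      simp [disjoint_left]
    have hdisj2 : Disjoint (Ioc 0 (2 * δ)) (Ioc (2 * δ) K) :=
      disjoint_left.mpr (fun x hx hx' => absurd hx.2 (not_le.mpr hx'.1))
    have hsplit : ∫ x in Icc 0 K, g x ∂(μ n) =
        ((μ n) {0}).toReal * g 0 +
          ((∫ x in Ioc 0 (2 * δ), g x ∂(μ n)) + ∫ x in Ioc (2 * δ) K, g x ∂(μ n)) := by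
      rw [icc_split K (2 * δ) (by linarith) h2δK,
        setIntegral_union hdisj1 (measurableSet_Ioc.union measurableSet_Ioc)
          (hi.mono_set (by rw [icc_split K (2 * δ) (by linarith) h2δK]; exact subset_union_left))
          (hi.mono_set (by rw [icc_split K (2 * δ) (by linarith) h2δK]; exact subset_union_right)),
        setIntegral_union hdisj2 measurableSet_Ioc
          (hi.mono_set ((subset_union_left).trans hsub1))
          (hi.mono_set ((subset_union_right).trans hsub1)),
        int_singleton]
    have hgz : g 0 = 0 := by simp [hg, min_assoc]
    have hzero : ∫ x in Ioc (2 * δ) K, g x ∂(μ n) = 0 :=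
      int_zero_meas (μ n) measurableSet_Ioc (fun x hx => by
        have hx0 : 0 < x := lt_trans (by linarith) hx.1
        have : 2 - x / δ ≤ 0 := by
          have : (2 : ℝ) < x / δ := by rw [lt_div_iff₀ hδ0]; linarith [hx.1]
          linarith
        have hmax : max 0 (2 - x / δ) = 0 := max_eq_left this
        have hxη : 0 ≤ x / η := div_nonneg hx0.le hη0.le
        simp [hg, hmax, min_eq_right hxη])
    have hupper : ∫ x in Ioc 0 (2 * δ), g x ∂(μ n) ≤ ((μ n) (Ioc 0 (2 * δ))).toReal :=
      int_le_meas (μ n) measurableSet_Ioc (hi.mono_set ((subset_union_left).trans hsub1))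
        (fun x _ => hg1 x)
    rw [hsplit, hgz, hzero, mul_zero]
    have := hA n
    linarith
  -- ν integral bounded
  have h3 : ∫ x in Icc 0 K, g x ∂ν ≤ C :=
    le_of_tendsto (hweak g hgc.continuousOn) (Eventually.of_forall h2)
  -- measure below integral
  have hiν : IntegrableOn g (Icc 0 K) ν :=
    hgc.continuousOn.integrableOn_compact isCompact_Icc
  have h1 : (ν (Ioc η δ)).toReal ≤ ∫ x in Icc 0 K, g x ∂ν := by
    have step1 : (ν (Ioc η δ)).toReal ≤ ∫ x in Ioc η δ, g x ∂ν := by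
      have := setIntegral_mono_on (f := fun _ => (1 : ℝ)) (g := g)
        (integrableOn_const (measure_ne_top _ _))
        (hiν.mono_set (Ioc_subset_Icc_self.trans (Icc_subset_Icc hη0.le hδK)))
        measurableSet_Ioc (fun x hx => by
          have hx1 : (1 : ℝ) ≤ x / η := (one_le_div hη0).mpr hx.1.le
          have hx2 : (1 : ℝ) ≤ 2 - x / δ := by
            have : x / δ ≤ 1 := (div_le_one hδ0).mpr hx.2
            linarith
          exact le_min le_rfl (le_min hx1 (le_max_of_le_right hx2)))
      simpa [setIntegral_const, measureReal_def] using this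
    have step2 : ∫ x in Ioc η δ, g x ∂ν ≤ ∫ x in Icc 0 K, g x ∂ν := by
      refine setIntegral_mono_set hiν ?_ ?_
      · exact (ae_restrict_iff' measurableSet_Icc).mpr
          (Eventually.of_forall (fun x hx => hg0 x hx.1))
      · exact HasSubset.Subset.eventuallyLE
          (Ioc_subset_Icc_self.trans (Icc_subset_Icc hη0.le hδK))
    linarith
  linarith

/-- If probability measures `μ n` on `[0, K]` (with `K ≥ 1`) converge weakly to `ν`, and for
every `n` the limit `c n = lim_{ε→0⁺} ∫_{(ε,K]} log λ dμ_n(λ)` exists and is nonnegative,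
then `μ_n({0}) → ν({0})`. -/
theorem betti_weak_convergence_atom_at_zero
    (K : ℝ) (hK : 1 ≤ K)
    (μ : ℕ → Measure ℝ) (ν : Measure ℝ)
    (hμprob : ∀ n, IsProbabilityMeasure (μ n))
    (hνprob : IsProbabilityMeasure ν)
    (hμsupp : ∀ n, (μ n) (Set.Icc 0 K)ᶜ = 0)
    (hνsupp : ν (Set.Icc 0 K)ᶜ = 0)
    (hweak : ∀ f : ℝ → ℝ, ContinuousOn f (Set.Icc 0 K) →
      Filter.Tendsto (fun n => ∫ x in Set.Icc 0 K, f x ∂(μ n)) Filter.atTop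
        (nhds (∫ x in Set.Icc 0 K, f x ∂ν)))
    (c : ℕ → ℝ)
    (hc : ∀ n, Filter.Tendsto (fun ε : ℝ => ∫ x in Set.Ioc ε K, Real.log x ∂(μ n))
      (nhdsWithin 0 (Set.Ioi 0)) (nhds (c n)))
    (hc0 : ∀ n, 0 ≤ c n) :
    Filter.Tendsto (fun n => ((μ n) {0}).toReal) Filter.atTop (nhds ((ν {0}).toReal)) := by
  haveI := hνprob
  rw [Metric.tendsto_atTop]
  intro ε hε
  have hlogK : 0 ≤ Real.log K := Real.log_nonneg hK
  set T : ℝ := 1 + 4 * Real.log K / ε with hT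
  have hT1 : 1 ≤ T := by
    have h : 0 ≤ 4 * Real.log K / ε := by positivity
    rw [hT]; linarith
  have hT0 : 0 < T := by linarith
  set δ : ℝ := Real.exp (-T) / 2 with hδ
  have hδ0 : 0 < δ := by positivity
  have h2δ : 2 * δ = Real.exp (-T) := by rw [hδ]; ring
  have h2δ1 : 2 * δ < 1 := by
    rw [h2δ, Real.exp_lt_one_iff]; linarith
  have hδ1 : δ < 1 := by linarith
  have hδK : δ ≤ K := by linarith
  have hlog2δ : Real.log (2 * δ) = -T := by rw [h2δ, Real.log_exp]
  set C : ℝ := Real.log K / T with hCdef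
  have hC0 : 0 ≤ C := div_nonneg hlogK hT0.le
  have hClt : C < ε / 4 := by
    rw [hCdef, div_lt_iff₀ hT0, hT]
    have : ε / 4 * (4 * Real.log K / ε) = Real.log K := by field_simp
    nlinarith
  have hA2 : ∀ n, ((μ n) (Ioc 0 (2 * δ))).toReal ≤ C := by
    intro n
    haveI := hμprob n
    have := massA K hK (μ n) (c n) (hc n) (hc0 n) (δ := 2 * δ) (by linarith) h2δ1
    rwa [hlog2δ, neg_neg] at this
  have hA1 : ∀ n, ((μ n) (Ioc 0 δ)).toReal ≤ C := by
    intro n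
    haveI := hμprob n
    refine le_trans ?_ (hA2 n)
    exact (ENNReal.toReal_le_toReal (measure_ne_top _ _) (measure_ne_top _ _)).mpr
      (measure_mono (Ioc_subset_Ioc_right (by linarith)))
  have hB : (ν (Ioc 0 δ)).toReal ≤ C := massB K hK μ ν hμprob hweak hδ0 h2δ1 hC0 hA2
  have hfc : Continuous (fun x : ℝ => max 0 (1 - x / δ)) :=
    continuous_const.max (continuous_const.sub (continuous_id.div_const δ))
  have htend := hweak _ hfc.continuousOn
  rw [Metric.tendsto_atTop] at htend
  obtain ⟨N, hN⟩ := htend (ε / 4) (by linarith)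
  refine ⟨N, fun n hn => ?_⟩
  haveI := hμprob n
  have h1 := atom_approx K (μ n) hδ0 hδK
  have h2 := atom_approx K ν hδ0 hδK
  have h3 := hN n hn
  rw [Real.dist_eq] at h3 ⊢
  have e1 : |(∫ x in Icc 0 K, max 0 (1 - x / δ) ∂(μ n)) - ((μ n) {0}).toReal| ≤ C :=
    h1.trans (hA1 n)
  have e2 : |(∫ x in Icc 0 K, max 0 (1 - x / δ) ∂ν) - (ν {0}).toReal| ≤ C :=
    h2.trans hB
  obtain ⟨e1a, e1b⟩ := abs_le.mp e1
  obtain ⟨e2a, e2b⟩ := abs_le.mp e2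
  obtain ⟨e3a, e3b⟩ := abs_lt.mp h3
  rw [abs_lt]
  constructor <;> linarith
end

section
/- Let K ≥ 1 and let μ be a Borel probability measure on [0, K] with distribution function σ(λ) := μ([0, λ]). Suppose the limit c(μ) := lim_{ε→0⁺} ∫_{(ε,K]} log λ dμ(λ) exists as a real number. Then the function λ ↦ (σ(λ) − σ(0))/λ is Lebesgue integrable on (0, K] and c(μ) = (log K)·(1 − σ(0)) − ∫_0^K (σ(λ) − σ(0))/λ dλ. -/
open MeasureTheory Filter Set

namespace LogMomentAux

lemma one_div_integrable (ε K : ℝ) (hε : 0 < ε) (hεK : ε ≤ K) :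
    IntegrableOn (fun t : ℝ => 1/t) (Set.Ioc ε K) volume := by
  refine (intervalIntegrable_iff_integrableOn_Ioc_of_le hεK).1 ?_
  apply intervalIntegral.intervalIntegrable_one_div
  · intro x hx
    rw [Set.uIcc_of_le hεK] at hx
    exact ne_of_gt (lt_of_lt_of_le hε hx.1)
  · exact continuousOn_id

lemma one_div_integral (ε K : ℝ) (hε : 0 < ε) (hεK : ε ≤ K) :
    ∫ t in Set.Ioc ε K, 1/t ∂volume = Real.log K - Real.log ε := by
  have hK : 0 < K := lt_of_lt_of_le hε hεK
  rw [← intervalIntegral.integral_of_le hεK, integral_one_div_of_pos hε hK,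
    Real.log_div (ne_of_gt hK) (ne_of_gt hε)]

lemma pointwise_log (K l : ℝ) (hl : 0 < l) (hlK : l ≤ K) :
    ENNReal.ofReal (Real.log K - Real.log l)
      = ∫⁻ t in Set.Ico l K, ENNReal.ofReal (1/t) ∂volume := by
  have h1 : ∫⁻ t in Set.Ico l K, ENNReal.ofReal (1/t) ∂volume
      = ∫⁻ t in Set.Ioc l K, ENNReal.ofReal (1/t) ∂volume := by
    rw [← Measure.restrict_congr_set Ioo_ae_eq_Ico,
        ← Measure.restrict_congr_set Ioo_ae_eq_Ioc]
  have h2 : ∫⁻ t in Set.Ioc l K, ENNReal.ofReal (1/t) ∂volume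
      = ENNReal.ofReal (∫ t in Set.Ioc l K, 1/t ∂volume) := by
    rw [← ofReal_integral_eq_lintegral_ofReal]
    · exact one_div_integrable l K hl hlK
    · filter_upwards [ae_restrict_mem measurableSet_Ioc] with t ht
      have : (0:ℝ) < t := hl.trans ht.1
      positivity
  rw [h1, h2, one_div_integral l K hl hlK]

lemma fubini_step (μ : Measure ℝ) [IsFiniteMeasure μ] (K ε : ℝ) (hε : 0 < ε) :
    ∫⁻ l in Set.Ioc ε K, ENNReal.ofReal (Real.log K - Real.log l) ∂μ
      = ∫⁻ t in Set.Ioc ε K, ENNReal.ofReal (1/t) * μ (Set.Ioc ε t) ∂volume := by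
  set S : Set (ℝ × ℝ) := {p : ℝ × ℝ | p.1 ≤ p.2 ∧ p.2 < K} with hSdef
  have hS : MeasurableSet S :=
    (measurableSet_le measurable_fst measurable_snd).inter
      (measurable_snd measurableSet_Iio)
  set F : ℝ × ℝ → ENNReal := S.indicator (fun p => ENNReal.ofReal (1/p.2)) with hFdef
  have hF : Measurable F :=
    ((measurable_const.div measurable_snd).ennreal_ofReal).indicator hS
  set g : ℝ → ENNReal := fun t => ENNReal.ofReal (1/t) * μ (Set.Ioc ε t) with hgdef
  have step1 : ∫⁻ l in Set.Ioc ε K, ENNReal.ofReal (Real.log K - Real.log l) ∂μ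
      = ∫⁻ l in Set.Ioc ε K, ∫⁻ t, F (l, t) ∂volume ∂μ := by
    apply setLIntegral_congr_fun measurableSet_Ioc
    intro l hl
    beta_reduce
    rw [pointwise_log K l (hε.trans hl.1) hl.2, ← lintegral_indicator measurableSet_Ico]
    refine lintegral_congr fun t => ?_
    by_cases h : l ≤ t ∧ t < K
    · simp [hFdef, hSdef, Set.indicator_apply, Set.mem_Ico, h]
    · simp [hFdef, hSdef, Set.indicator_apply, Set.mem_Ico, h]
  have step2 : ∫⁻ l in Set.Ioc ε K, ∫⁻ t, F (l, t) ∂volume ∂μ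
      = ∫⁻ t, ∫⁻ l in Set.Ioc ε K, F (l, t) ∂μ ∂volume :=
    lintegral_lintegral_swap hF.aemeasurable
  have step3 : ∀ t : ℝ, ∫⁻ l in Set.Ioc ε K, F (l, t) ∂μ
      = (Set.Iio K).indicator g t := by
    intro t
    by_cases htK : t < K
    · have hfun : (fun l => F (l, t)) = (Set.Iic t).indicator (fun _ => ENNReal.ofReal (1/t)) := by
        ext l
        by_cases h : l ≤ t
        · simp [hFdef, hSdef, Set.indicator_apply, h, htK]
        · simp [hFdef, hSdef, Set.indicator_apply, h]
      rw [hfun, lintegral_indicator measurableSet_Iic, setLIntegral_const,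
        Measure.restrict_apply measurableSet_Iic, Set.inter_comm, Set.Ioc_inter_Iic,
        min_eq_right htK.le]
      simp [Set.indicator_of_mem (Set.mem_Iio.2 htK), hgdef]
    · have hfun : (fun l => F (l, t)) = fun _ => 0 := by
        ext l
        simp [hFdef, hSdef, Set.indicator_apply, htK]
      rw [hfun, lintegral_const, zero_mul]
      simp [Set.indicator_of_notMem (fun h => htK (Set.mem_Iio.1 h))]
  have step4 : (Set.Iio K).indicator g = (Set.Ioo ε K).indicator g := by
    ext t
    by_cases h1 : t ∈ Set.Ioo ε K
    · rw [Set.indicator_of_mem h1, Set.indicator_of_mem (Set.mem_Iio.2 h1.2)]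
    · rw [Set.indicator_of_notMem h1]
      by_cases h2 : t ∈ Set.Iio K
      · rw [Set.indicator_of_mem h2]
        have ht : t ≤ ε := by
          by_contra hcon
          exact h1 ⟨lt_of_not_ge hcon, h2⟩
        simp [hgdef, Set.Ioc_eq_empty (fun hlt => absurd (hlt.trans_le ht) (lt_irrefl ε))]
      · rw [Set.indicator_of_notMem h2]
  calc ∫⁻ l in Set.Ioc ε K, ENNReal.ofReal (Real.log K - Real.log l) ∂μ
      = ∫⁻ t, ∫⁻ l in Set.Ioc ε K, F (l, t) ∂μ ∂volume := by rw [step1, step2]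
    _ = ∫⁻ t, (Set.Ioo ε K).indicator g t ∂volume := by
        simp_rw [step3]; rw [step4]
    _ = ∫⁻ t in Set.Ioo ε K, g t ∂volume := lintegral_indicator measurableSet_Ioo g
    _ = ∫⁻ t in Set.Ioc ε K, g t ∂volume := by
        rw [Measure.restrict_congr_set Ioo_ae_eq_Ioc]

lemma log_integrable (μ : Measure ℝ) [IsFiniteMeasure μ] (K ε : ℝ) (hε : 0 < ε) :
    IntegrableOn (fun l => Real.log l) (Set.Ioc ε K) μ := by
  refine Integrable.mono' (integrable_const (max |Real.log ε| |Real.log K|))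
    Real.measurable_log.aestronglyMeasurable ?_
  filter_upwards [ae_restrict_mem measurableSet_Ioc] with l hl
  rw [Real.norm_eq_abs]
  exact abs_le_max_abs_abs (Real.log_le_log hε hl.1.le) (Real.log_le_log (hε.trans hl.1) hl.2)

lemma real_form (μ : Measure ℝ) [IsFiniteMeasure μ] (K ε : ℝ) (hε : 0 < ε) (hεK : ε ≤ K) :
    IntegrableOn (fun t => (μ (Set.Ioc ε t)).toReal / t) (Set.Ioc ε K) volume ∧
    ∫ t in Set.Ioc ε K, (μ (Set.Ioc ε t)).toReal / t
      = Real.log K * (μ (Set.Ioc ε K)).toReal - ∫ l in Set.Ioc ε K, Real.log l ∂μ := by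
  have hlog := log_integrable μ K ε hε
  have hsub : IntegrableOn (fun l => Real.log K - Real.log l) (Set.Ioc ε K) μ :=
    (integrable_const _).sub hlog
  have hnn : 0 ≤ᵐ[μ.restrict (Set.Ioc ε K)] fun l => Real.log K - Real.log l := by
    filter_upwards [ae_restrict_mem measurableSet_Ioc] with l hl
    have := Real.log_le_log (hε.trans hl.1) hl.2
    simp only [Pi.zero_apply]
    linarith
  have key : ENNReal.ofReal (∫ l in Set.Ioc ε K, (Real.log K - Real.log l) ∂μ)
      = ∫⁻ t in Set.Ioc ε K, ENNReal.ofReal ((μ (Set.Ioc ε t)).toReal / t) ∂volume := by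
    rw [ofReal_integral_eq_lintegral_ofReal hsub hnn, fubini_step μ K ε hε]
    apply setLIntegral_congr_fun measurableSet_Ioc
    intro t ht
    beta_reduce
    have ht0 : (0:ℝ) < t := hε.trans ht.1
    symm
    rw [ENNReal.ofReal_div_of_pos ht0, ENNReal.ofReal_toReal (measure_ne_top μ _),
      ENNReal.div_eq_inv_mul, one_div, ENNReal.ofReal_inv_of_pos ht0]
  have hmeas : Measurable (fun t => (μ (Set.Ioc ε t)).toReal / t) := by
    have : Monotone (fun t => μ (Set.Ioc ε t)) := fun a b hab =>
      measure_mono (Set.Ioc_subset_Ioc_right hab)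
    exact (ENNReal.measurable_toReal.comp this.measurable).div measurable_id
  have hfnn : 0 ≤ᵐ[volume.restrict (Set.Ioc ε K)]
      fun t => (μ (Set.Ioc ε t)).toReal / t := by
    filter_upwards [ae_restrict_mem measurableSet_Ioc] with t ht
    have : (0:ℝ) < t := hε.trans ht.1
    positivity
  have hint : IntegrableOn (fun t => (μ (Set.Ioc ε t)).toReal / t) (Set.Ioc ε K) volume := by
    refine ⟨hmeas.aestronglyMeasurable, ?_⟩
    rw [hasFiniteIntegral_iff_ofReal hfnn, ← key]
    exact ENNReal.ofReal_lt_top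
  refine ⟨hint, ?_⟩
  have h2 : ENNReal.ofReal (∫ t in Set.Ioc ε K, (μ (Set.Ioc ε t)).toReal / t ∂volume)
      = ENNReal.ofReal (∫ l in Set.Ioc ε K, (Real.log K - Real.log l) ∂μ) := by
    rw [key, ofReal_integral_eq_lintegral_ofReal hint hfnn]
  have h3 := (ENNReal.ofReal_eq_ofReal_iff
    (integral_nonneg_of_ae hfnn) (integral_nonneg_of_ae hnn)).1 h2
  rw [h3, integral_sub (integrable_const _) hlog, setIntegral_const, smul_eq_mul, mul_comm, measureReal_def]

lemma tendsto_div_nat (a : ℝ) (ha : 0 < a) :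
    Tendsto (fun n : ℕ => a / (n+1)) atTop (nhdsWithin 0 (Set.Ioi 0)) := by
  rw [tendsto_nhdsWithin_iff]
  constructor
  · have h := tendsto_one_div_add_atTop_nhds_zero_nat.const_mul a
    rw [mul_zero] at h
    refine h.congr fun n => ?_
    rw [mul_one_div]
  · exact Eventually.of_forall fun n => div_pos ha (by positivity)

lemma iUnion_Ioc_div (a b : ℝ) (ha : 0 < a) :
    (⋃ n : ℕ, Set.Ioc (a/(n+1)) b) = Set.Ioc 0 b := by
  ext x
  simp only [Set.mem_iUnion, Set.mem_Ioc]
  constructor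
  · rintro ⟨n, hn, hb⟩
    exact ⟨lt_trans (div_pos ha (by positivity)) hn, hb⟩
  · rintro ⟨hx, hb⟩
    obtain ⟨n, hn⟩ := exists_nat_gt (a / x)
    refine ⟨n, ?_, hb⟩
    rw [div_lt_iff₀ hx] at hn
    rw [div_lt_iff₀ (by positivity : (0:ℝ) < (n:ℝ)+1)]
    nlinarith
    
lemma monotone_Ioc_div (a b : ℝ) (ha : 0 < a) :
    Monotone (fun n : ℕ => Set.Ioc (a/(n+1)) b) := by
  intro n m hnm
  apply Set.Ioc_subset_Ioc_left
  apply div_le_div_of_nonneg_left ha.le (by positivity)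
  have : (n:ℝ) ≤ (m:ℝ) := Nat.cast_le.2 hnm
  linarith

end LogMomentAux

open LogMomentAux in
/-- If `μ` is a probability measure on `[0, K]` (with `K ≥ 1`) whose distribution function
is `σ`, and the limit `c = lim_{ε→0⁺} ∫_{(ε,K]} log λ dμ(λ)` exists, then
`λ ↦ (σ(λ) - σ(0))/λ` is Lebesgue integrable on `(0, K]` and
`c = log K · (1 - σ(0)) - ∫_0^K (σ(λ) - σ(0))/λ dλ`. -/
theorem log_moment_integral_formula
    (K : ℝ) (hK : 1 ≤ K)
    (μ : Measure ℝ) (hμprob : IsProbabilityMeasure μ)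
    (hμsupp : μ (Set.Icc 0 K)ᶜ = 0)
    (σ : ℝ → ℝ) (hσ : ∀ lam, σ lam = (μ (Set.Icc 0 lam)).toReal)
    (c : ℝ)
    (hc : Filter.Tendsto (fun ε : ℝ => ∫ x in Set.Ioc ε K, Real.log x ∂μ)
      (nhdsWithin 0 (Set.Ioi 0)) (nhds c)) :
    MeasureTheory.IntegrableOn (fun lam => (σ lam - σ 0) / lam) (Set.Ioc 0 K) volume ∧
    c = Real.log K * (1 - σ 0) - ∫ lam in Set.Ioc 0 K, (σ lam - σ 0) / lam := by
  have hK0 : (0:ℝ) < K := lt_of_lt_of_le one_pos hK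
  have hμIccK : μ (Set.Icc 0 K) = 1 := by
    have h := measure_add_measure_compl (μ := μ) (measurableSet_Icc (a := (0:ℝ)) (b := K))
    rwa [hμsupp, add_zero, measure_univ] at h
  have hσK : σ K = 1 := by rw [hσ, hμIccK, ENNReal.toReal_one]
  have hsplit : ∀ a t : ℝ, 0 ≤ a → a ≤ t → (μ (Set.Ioc a t)).toReal = σ t - σ a := by
    intro a t h0a hat
    have hd : Disjoint (Set.Icc 0 a) (Set.Ioc a t) :=
      (Set.Iic_disjoint_Ioc le_rfl).mono_left Set.Icc_subset_Iic_self
    have hu : μ (Set.Icc 0 t) = μ (Set.Icc 0 a) + μ (Set.Ioc a t) := by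
      rw [← Set.Icc_union_Ioc_eq_Icc h0a hat, measure_union hd measurableSet_Ioc]
    rw [hσ, hσ, hu, ENNReal.toReal_add (measure_ne_top _ _) (measure_ne_top _ _)]
    ring
  have hσmono : Monotone σ := by
    intro a b hab
    rw [hσ, hσ]
    exact ENNReal.toReal_mono (measure_ne_top _ _)
      (measure_mono (Set.Icc_subset_Icc_right hab))
  -- per-ε formula
  have heps : ∀ ε : ℝ, 0 < ε → ε ≤ K →
      IntegrableOn (fun t => (σ t - σ 0) / t) (Set.Ioc ε K) volume ∧
      ∫ t in Set.Ioc ε K, (σ t - σ 0) / t ∂volume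
        = Real.log K * (1 - σ ε) - (∫ x in Set.Ioc ε K, Real.log x ∂μ)
          + (σ ε - σ 0) * (Real.log K - Real.log ε) := by
    intro ε hε hεK
    obtain ⟨hint, hval⟩ := real_form μ K ε hε hεK
    have hIocK : (μ (Set.Ioc ε K)).toReal = 1 - σ ε := by
      rw [hsplit ε K hε.le hεK, hσK]
    have hdiv : IntegrableOn (fun t : ℝ => (σ ε - σ 0) * (1/t)) (Set.Ioc ε K) volume :=
      (one_div_integrable ε K hε hεK).const_mul _
    have hdivval : ∫ t in Set.Ioc ε K, (σ ε - σ 0) * (1/t) ∂volume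
        = (σ ε - σ 0) * (Real.log K - Real.log ε) := by
      rw [integral_const_mul, one_div_integral ε K hε hεK]
    have hcong : Set.EqOn (fun t => (μ (Set.Ioc ε t)).toReal / t + (σ ε - σ 0) * (1/t))
        (fun t => (σ t - σ 0) / t) (Set.Ioc ε K) := by
      intro t ht
      have ht0 : t ≠ 0 := ne_of_gt (hε.trans ht.1)
      simp only
      rw [hsplit ε t hε.le ht.1.le, mul_one_div, ← add_div]
      congr 1
      ring
    constructor
    · exact IntegrableOn.congr_fun (hint.add hdiv) hcong measurableSet_Ioc
    · rw [← setIntegral_congr_fun measurableSet_Ioc hcong,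
        integral_add hint hdiv, hval, hdivval, hIocK]
  -- the bound (σ ε - σ 0) * (-log ε) ≤ I ε - c
  have hIbound : ∀ ε : ℝ, 0 < ε → ε < 1 →
      (σ ε - σ 0) * (-Real.log ε) ≤ (∫ x in Set.Ioc ε K, Real.log x ∂μ) - c := by
    intro ε hε hε1
    have hεK : ε ≤ K := le_of_lt (lt_of_lt_of_le hε1 hK)
    have hδpos : ∀ n : ℕ, 0 < ε / (n+1) := fun n => div_pos hε (by positivity)
    have hδle : ∀ n : ℕ, ε / (n+1) ≤ ε := fun n => by
      apply div_le_self hε.le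
      have : (0:ℝ) ≤ (n:ℝ) := Nat.cast_nonneg n
      linarith
    have hIsplit : ∀ n : ℕ, ∫ x in Set.Ioc (ε/(n+1)) K, Real.log x ∂μ
        = (∫ x in Set.Ioc (ε/(n+1)) ε, Real.log x ∂μ)
          + ∫ x in Set.Ioc ε K, Real.log x ∂μ := by
      intro n
      rw [← setIntegral_union (Set.Ioc_disjoint_Ioc_of_le le_rfl) measurableSet_Ioc
          (log_integrable μ ε (ε/(n+1)) (hδpos n)) (log_integrable μ K ε hε),
        Set.Ioc_union_Ioc_eq_Ioc (hδle n) hεK]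
    have hbound : ∀ n : ℕ, ∫ x in Set.Ioc (ε/(n+1)) ε, Real.log x ∂μ
        ≤ Real.log ε * (μ (Set.Ioc (ε/(n+1)) ε)).toReal := by
      intro n
      calc ∫ x in Set.Ioc (ε/(n+1)) ε, Real.log x ∂μ
          ≤ ∫ _ in Set.Ioc (ε/(n+1)) ε, Real.log ε ∂μ :=
            setIntegral_mono_on (log_integrable μ ε (ε/(n+1)) (hδpos n))
              (integrable_const _) measurableSet_Ioc
              (fun x hx => Real.log_le_log ((hδpos n).trans hx.1) hx.2)
        _ = Real.log ε * (μ (Set.Ioc (ε/(n+1)) ε)).toReal := by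
            rw [setIntegral_const, smul_eq_mul, mul_comm, measureReal_def]
    have hμtend : Tendsto (fun n : ℕ => (μ (Set.Ioc (ε/(n+1)) ε)).toReal) atTop
        (nhds ((μ (Set.Ioc 0 ε)).toReal)) := by
      have h1 := tendsto_measure_iUnion_atTop (μ := μ) (monotone_Ioc_div ε ε hε)
      rw [iUnion_Ioc_div ε ε hε] at h1
      exact (ENNReal.tendsto_toReal (measure_ne_top μ _)).comp h1
    have hItend : Tendsto (fun n : ℕ => ∫ x in Set.Ioc (ε/(n+1)) K, Real.log x ∂μ) atTop
        (nhds c) := hc.comp (tendsto_div_nat ε hε)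
    have hle : c - (∫ x in Set.Ioc ε K, Real.log x ∂μ)
        ≤ Real.log ε * (μ (Set.Ioc 0 ε)).toReal := by
      refine le_of_tendsto_of_tendsto'
        (hItend.sub_const (∫ x in Set.Ioc ε K, Real.log x ∂μ))
        (hμtend.const_mul (Real.log ε)) (fun n => ?_)
      rw [hIsplit n]
      have := hbound n
      linarith
    rw [hsplit 0 ε le_rfl hε.le] at hle
    nlinarith [hle]
  -- squeeze limits
  have hm0 : Tendsto (fun ε => (σ ε - σ 0) * (-Real.log ε))
      (nhdsWithin 0 (Set.Ioi 0)) (nhds 0) := by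
    have hg : Tendsto (fun ε => (∫ x in Set.Ioc ε K, Real.log x ∂μ) - c)
        (nhdsWithin 0 (Set.Ioi 0)) (nhds 0) := by
      have := hc.sub_const c
      rwa [sub_self] at this
    refine squeeze_zero' ?_ ?_ hg
    · filter_upwards [Ioo_mem_nhdsGT_of_mem (Set.mem_Ico.2 ⟨le_rfl, one_pos⟩)] with ε hε
      have h1 : 0 ≤ σ ε - σ 0 := sub_nonneg.2 (hσmono hε.1.le)
      have h2 : Real.log ε < 0 := Real.log_neg hε.1 hε.2
      nlinarith
    · filter_upwards [Ioo_mem_nhdsGT_of_mem (Set.mem_Ico.2 ⟨le_rfl, one_pos⟩)] with ε hε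
      exact hIbound ε hε.1 hε.2
  have hmtend : Tendsto (fun ε => σ ε - σ 0) (nhdsWithin 0 (Set.Ioi 0)) (nhds 0) := by
    refine squeeze_zero' ?_ ?_ hm0
    · filter_upwards [self_mem_nhdsWithin] with ε hε
      exact sub_nonneg.2 (hσmono (le_of_lt hε))
    · filter_upwards [Ioo_mem_nhdsGT_of_mem
        (Set.mem_Ico.2 ⟨le_rfl, Real.exp_pos (-1)⟩)] with ε hε
      have h1 : Real.log ε ≤ -1 := by
        have := Real.log_le_log hε.1 hε.2.le
        rwa [Real.log_exp] at this
      have h2 : 0 ≤ σ ε - σ 0 := sub_nonneg.2 (hσmono hε.1.le)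
      nlinarith
  have hσtend : Tendsto σ (nhdsWithin 0 (Set.Ioi 0)) (nhds (σ 0)) := by
    have := hmtend.add_const (σ 0)
    rw [zero_add] at this
    refine this.congr fun ε => by ring
  have hlogterm : Tendsto (fun ε => (σ ε - σ 0) * (Real.log K - Real.log ε))
      (nhdsWithin 0 (Set.Ioi 0)) (nhds 0) := by
    have h := (hmtend.mul_const (Real.log K)).add hm0
    rw [zero_mul, add_zero] at h
    exact h.congr fun ε => by ring
  -- limit of the truncated integrals
  have hJtend : Tendsto (fun ε => ∫ t in Set.Ioc ε K, (σ t - σ 0) / t ∂volume)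
      (nhdsWithin 0 (Set.Ioi 0)) (nhds (Real.log K * (1 - σ 0) - c)) := by
    have hT : Tendsto (fun ε => Real.log K * (1 - σ ε)
          - (∫ x in Set.Ioc ε K, Real.log x ∂μ)
          + (σ ε - σ 0) * (Real.log K - Real.log ε))
        (nhdsWithin 0 (Set.Ioi 0)) (nhds (Real.log K * (1 - σ 0) - c + 0)) :=
      (((tendsto_const_nhds.sub hσtend).const_mul (Real.log K)).sub hc).add hlogterm
    rw [add_zero] at hT
    refine hT.congr' ?_
    filter_upwards [Ioo_mem_nhdsGT_of_mem (Set.mem_Ico.2 ⟨le_rfl, hK0⟩)] with ε hε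
    exact ((heps ε hε.1 hε.2.le).2).symm
  -- MCT
  have hσmeas : Measurable σ := hσmono.measurable
  have hhmeas : Measurable (fun t => (σ t - σ 0) / t) :=
    (hσmeas.sub measurable_const).div measurable_id
  have hhnn : ∀ t : ℝ, t ∈ Set.Ioc (0:ℝ) K → 0 ≤ (σ t - σ 0) / t := fun t ht =>
    div_nonneg (sub_nonneg.2 (hσmono ht.1.le)) ht.1.le
  have hεleK : ∀ n : ℕ, K / (n+1) ≤ K := fun n => by
    apply div_le_self hK0.le
    have : (0:ℝ) ≤ (n:ℝ) := Nat.cast_nonneg n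
    linarith
  have hεpos : ∀ n : ℕ, 0 < K / (n+1) := fun n => div_pos hK0 (by positivity)
  have hJseq : Tendsto (fun n : ℕ => ∫ t in Set.Ioc (K/(n+1)) K, (σ t - σ 0) / t ∂volume)
      atTop (nhds (Real.log K * (1 - σ 0) - c)) := hJtend.comp (tendsto_div_nat K hK0)
  have hLnn : 0 ≤ Real.log K * (1 - σ 0) - c := by
    refine ge_of_tendsto' hJseq fun n => ?_
    exact setIntegral_nonneg measurableSet_Ioc fun t ht =>
      hhnn t ⟨(hεpos n).trans ht.1, ht.2⟩
  have hρn : ∀ n : ℕ, ∫⁻ t in Set.Ioc (K/(n+1)) K, ENNReal.ofReal ((σ t - σ 0) / t) ∂volume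
      = ENNReal.ofReal (∫ t in Set.Ioc (K/(n+1)) K, (σ t - σ 0) / t ∂volume) := by
    intro n
    rw [← ofReal_integral_eq_lintegral_ofReal (heps _ (hεpos n) (hεleK n)).1]
    filter_upwards [ae_restrict_mem measurableSet_Ioc] with t ht
    exact hhnn t ⟨(hεpos n).trans ht.1, ht.2⟩
  have hlim : Tendsto (fun n : ℕ =>
        ∫⁻ t in Set.Ioc (K/(n+1)) K, ENNReal.ofReal ((σ t - σ 0) / t) ∂volume) atTop
      (nhds (∫⁻ t in Set.Ioc 0 K, ENNReal.ofReal ((σ t - σ 0) / t) ∂volume)) := by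
    have h1 := tendsto_measure_iUnion_atTop
      (μ := volume.withDensity (fun t => ENNReal.ofReal ((σ t - σ 0) / t)))
      (monotone_Ioc_div K K hK0)
    rw [iUnion_Ioc_div K K hK0] at h1
    have h2 : ∀ s : Set ℝ, MeasurableSet s →
        (volume.withDensity (fun t => ENNReal.ofReal ((σ t - σ 0) / t))) s
          = ∫⁻ t in s, ENNReal.ofReal ((σ t - σ 0) / t) ∂volume :=
      fun s hs => withDensity_apply _ hs
    simp only [Function.comp_def] at h1
    rw [h2 _ measurableSet_Ioc] at h1
    refine h1.congr fun n => h2 _ measurableSet_Ioc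
  have hEq : ∫⁻ t in Set.Ioc 0 K, ENNReal.ofReal ((σ t - σ 0) / t) ∂volume
      = ENNReal.ofReal (Real.log K * (1 - σ 0) - c) := by
    refine tendsto_nhds_unique hlim ?_
    have := (ENNReal.continuous_ofReal.tendsto _).comp hJseq
    refine Tendsto.congr (fun n => (hρn n).symm) this
  have hnnae : 0 ≤ᵐ[volume.restrict (Set.Ioc (0:ℝ) K)] fun t => (σ t - σ 0) / t := by
    filter_upwards [ae_restrict_mem measurableSet_Ioc] with t ht
    exact hhnn t ht
  have hintOn : IntegrableOn (fun t => (σ t - σ 0) / t) (Set.Ioc 0 K) volume := by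
    refine ⟨hhmeas.aestronglyMeasurable, ?_⟩
    rw [hasFiniteIntegral_iff_ofReal hnnae, hEq]
    exact ENNReal.ofReal_lt_top
  refine ⟨hintOn, ?_⟩
  have hval : ∫ t in Set.Ioc 0 K, (σ t - σ 0) / t ∂volume
      = Real.log K * (1 - σ 0) - c := by
    have h4 := ofReal_integral_eq_lintegral_ofReal hintOn hnnae
    rw [hEq] at h4
    exact (ENNReal.ofReal_eq_ofReal_iff (integral_nonneg_of_ae hnnae) hLnn).1 h4
  rw [hval]
  ring
end

section
/- Let K ≥ 1 and let μ be a Borel probability measure on [0, K] with distribution function σ(λ) := μ([0, λ]). Suppose the limit c(μ) := lim_{ε→0⁺} ∫_{(ε,K]} log λ dμ(λ) exists and satisfies c(μ) ≥ 0. Then ∫_0^K (σ(λ) − σ(0))/λ dλ ≤ log K. -/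
open MeasureTheory Filter Set
open scoped ENNReal

/-- `∫⁻ λ in [x,K], 1/λ dλ = log K - log x` for `0 < x ≤ K`. -/
lemma lintegral_inv_Icc (x K : ℝ) (hx : 0 < x) (hxK : x ≤ K) :
    ∫⁻ lam in Set.Icc x K, ENNReal.ofReal lam⁻¹ =
      ENNReal.ofReal (Real.log K - Real.log x) := by
  have hKpos : 0 < K := lt_of_lt_of_le hx hxK
  have hcont : ContinuousOn (fun lam : ℝ => lam⁻¹) (Set.Icc x K) := by
    apply ContinuousOn.inv₀ continuousOn_id
    intro y hy
    exact ne_of_gt (lt_of_lt_of_le hx hy.1)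
  have hint : IntegrableOn (fun lam : ℝ => lam⁻¹) (Set.Icc x K) := by
    exact hcont.integrableOn_Icc
  have h2 : ∫ lam in Set.Icc x K, lam⁻¹ = Real.log K - Real.log x := by
    rw [MeasureTheory.integral_Icc_eq_integral_Ioc,
      ← intervalIntegral.integral_of_le hxK,
      integral_inv_of_pos hx hKpos, Real.log_div (ne_of_gt hKpos) (ne_of_gt hx)]
  rw [← h2]
  rw [← ofReal_integral_eq_lintegral_ofReal hint ?_]
  filter_upwards [ae_restrict_mem measurableSet_Icc] with y hy
  have : 0 < y := lt_of_lt_of_le hx hy.1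
  positivity

/-- If `μ` is a probability measure on `[0, K]` (with `K ≥ 1`) whose distribution function
is `σ`, and the limit `c = lim_{ε→0⁺} ∫_{(ε,K]} log λ dμ(λ)` exists and is nonnegative,
then `∫_0^K (σ(λ) - σ(0))/λ dλ ≤ log K`. -/
theorem log_moment_integral_bound
    (K : ℝ) (hK : 1 ≤ K)
    (μ : Measure ℝ) (hμprob : IsProbabilityMeasure μ)
    (hμsupp : μ (Set.Icc 0 K)ᶜ = 0)
    (σ : ℝ → ℝ) (hσ : ∀ lam, σ lam = (μ (Set.Icc 0 lam)).toReal)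
    (c : ℝ)
    (hc : Filter.Tendsto (fun ε : ℝ => ∫ x in Set.Ioc ε K, Real.log x ∂μ)
      (nhdsWithin 0 (Set.Ioi 0)) (nhds c))
    (hc0 : 0 ≤ c) :
    ∫⁻ lam in Set.Ioc 0 K, ENNReal.ofReal ((σ lam - σ 0) / lam) ≤
      ENNReal.ofReal (Real.log K) := by
  have hK0 : (0:ℝ) < K := lt_of_lt_of_le zero_lt_one hK
  set g : ℝ → ℝ := fun x => Real.log K - Real.log x with hg_def
  -- Step 1: rewrite the integrand
  have hstep1 : ∫⁻ lam in Set.Ioc 0 K, ENNReal.ofReal ((σ lam - σ 0) / lam)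
      = ∫⁻ lam in Set.Ioc 0 K, μ (Set.Ioc 0 lam) * ENNReal.ofReal lam⁻¹ := by
    refine setLIntegral_congr_fun measurableSet_Ioc
      (fun lam hlam => ?_)
    have hsplit : μ (Set.Icc 0 lam) = μ (Set.Icc 0 0) + μ (Set.Ioc 0 lam) := by
      rw [← measure_union ?_ measurableSet_Ioc]
      · rw [Set.Icc_union_Ioc_eq_Icc le_rfl hlam.1.le]
      · rw [Set.disjoint_left]
        intro a ha hb
        have ha0 : a = 0 := le_antisymm ha.2 ha.1
        rw [ha0] at hb
        exact lt_irrefl 0 hb.1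
    rw [hσ, hσ, hsplit, ENNReal.toReal_add (measure_ne_top _ _) (measure_ne_top _ _),
      add_sub_cancel_left, div_eq_mul_inv,
      ENNReal.ofReal_mul ENNReal.toReal_nonneg,
      ENNReal.ofReal_toReal (measure_ne_top _ _)]
  -- Step 2: Tonelli
  have hsetmeas : MeasurableSet {p : ℝ × ℝ | 0 < p.2 ∧ p.2 ≤ p.1} :=
    (measurableSet_lt measurable_const measurable_snd).inter
      (measurableSet_le measurable_snd measurable_fst)
  set F : ℝ × ℝ → ℝ≥0∞ :=
    fun p => Set.indicator {p : ℝ × ℝ | 0 < p.2 ∧ p.2 ≤ p.1}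
      (fun p => ENNReal.ofReal p.1⁻¹) p with hF_def
  have hFmeas : Measurable F :=
    (ENNReal.measurable_ofReal.comp measurable_fst.inv).indicator hsetmeas
  have hswap : ∫⁻ lam in Set.Ioc 0 K, μ (Set.Ioc 0 lam) * ENNReal.ofReal lam⁻¹
      = ∫⁻ x in Set.Ioc 0 K, ENNReal.ofReal (g x) ∂μ := by
    have e1 : ∫⁻ lam in Set.Ioc 0 K, μ (Set.Ioc 0 lam) * ENNReal.ofReal lam⁻¹
        = ∫⁻ lam in Set.Ioc 0 K, ∫⁻ x, F (lam, x) ∂μ := by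
      refine lintegral_congr fun lam => ?_
      have : ∀ x : ℝ, F (lam, x) =
          (Set.Ioc 0 lam).indicator (fun _ => ENNReal.ofReal lam⁻¹) x := by
        intro x
        simp only [hF_def, Set.indicator, Set.mem_setOf_eq, Set.mem_Ioc]
      simp_rw [this]
      rw [lintegral_indicator measurableSet_Ioc, setLIntegral_const, mul_comm]
    have e2 : ∫⁻ lam in Set.Ioc 0 K, ∫⁻ x, F (lam, x) ∂μ
        = ∫⁻ x, (∫⁻ lam in Set.Ioc 0 K, F (lam, x)) ∂μ := by
      exact lintegral_lintegral_swap (f := fun lam x => F (lam, x)) hFmeas.aemeasurable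
    have e3 : ∫⁻ x, (∫⁻ lam in Set.Ioc 0 K, F (lam, x)) ∂μ
        = ∫⁻ x, (Set.Ioc 0 K).indicator (fun x => ENNReal.ofReal (g x)) x ∂μ := by
      refine lintegral_congr fun x => ?_
      by_cases hx : x ∈ Set.Ioc 0 K
      · have hFx : ∀ lam : ℝ, F (lam, x) =
            (Set.Ici x).indicator (fun lam => ENNReal.ofReal lam⁻¹) lam := by
          intro lam
          simp only [hF_def, Set.indicator, Set.mem_setOf_eq, Set.mem_Ici]
          by_cases h : x ≤ lam
          · simp [h, hx.1]
          · simp [h]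
        simp_rw [hFx]
        rw [lintegral_indicator measurableSet_Ici, Measure.restrict_restrict measurableSet_Ici]
        have hseteq : Set.Ici x ∩ Set.Ioc 0 K = Set.Icc x K := by
          ext y
          simp only [Set.mem_inter_iff, Set.mem_Ici, Set.mem_Ioc, Set.mem_Icc]
          constructor
          · rintro ⟨h1, _, h3⟩; exact ⟨h1, h3⟩
          · rintro ⟨h1, h2⟩; exact ⟨h1, lt_of_lt_of_le hx.1 h1, h2⟩
        rw [hseteq, lintegral_inv_Icc x K hx.1 hx.2, Set.indicator_of_mem hx]
      · rw [Set.indicator_of_notMem hx]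
        have hz : ∀ lam ∈ Set.Ioc (0:ℝ) K, F (lam, x) = 0 := by
          intro lam hlam
          apply Set.indicator_of_notMem
          rintro ⟨h1, h2⟩
          exact hx ⟨h1, h2.trans hlam.2⟩
        rw [setLIntegral_congr_fun measurableSet_Ioc
          hz, lintegral_zero]
    rw [e1, e2, e3, ← lintegral_indicator measurableSet_Ioc]
  -- Step 3: monotone convergence and the limit hypothesis
  rw [hstep1, hswap]
  set e : ℕ → ℝ := fun n => 1 / (n + 1) with he_def
  have he_pos : ∀ n, 0 < e n := fun n => by positivity
  set fn : ℕ → ℝ → ℝ≥0∞ :=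
    fun n x => (Set.Ioc (e n) K).indicator (fun x => ENNReal.ofReal (g x)) x with hfn_def
  have he_anti : ∀ n m : ℕ, n ≤ m → e m ≤ e n := by
    intro n m hnm
    apply one_div_le_one_div_of_le (by positivity)
    have : (n : ℝ) ≤ m := Nat.cast_le.2 hnm
    linarith
  have hfn_meas : ∀ n, Measurable (fn n) := fun n =>
    (ENNReal.measurable_ofReal.comp (measurable_const.sub Real.measurable_log)).indicator
      measurableSet_Ioc
  have hfn_mono : Monotone fn := by
    intro n m hnm x
    exact Set.indicator_le_indicator_of_subset
      (Set.Ioc_subset_Ioc_left (he_anti n m hnm)) (fun a => zero_le) x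
  have hfn_sup : ∀ x, (⨆ n, fn n x) = (Set.Ioc 0 K).indicator
      (fun x => ENNReal.ofReal (g x)) x := by
    intro x
    by_cases hx : x ∈ Set.Ioc 0 K
    · obtain ⟨n, hn⟩ := exists_nat_one_div_lt hx.1
      apply le_antisymm
      · refine iSup_le fun m => ?_
        exact Set.indicator_le_indicator_of_subset
          (Set.Ioc_subset_Ioc_left (he_pos m).le) (fun a => zero_le) x
      · calc (Set.Ioc 0 K).indicator (fun x => ENNReal.ofReal (g x)) x
            = fn n x := by
              rw [Set.indicator_of_mem hx]
              have hxm : x ∈ Set.Ioc (e n) K := ⟨hn, hx.2⟩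
              simp only [hfn_def]
              rw [Set.indicator_of_mem hxm]
          _ ≤ ⨆ n, fn n x := le_iSup (fun n => fn n x) n
    · have : ∀ n, fn n x = 0 := by
        intro n
        apply Set.indicator_of_notMem
        intro hxn
        exact hx ⟨(he_pos n).trans hxn.1, hxn.2⟩
      simp [this, Set.indicator_of_notMem hx]
  -- monotone convergence
  have hmc : ∫⁻ x in Set.Ioc 0 K, ENNReal.ofReal (g x) ∂μ
      = ⨆ n, ∫⁻ x in Set.Ioc (e n) K, ENNReal.ofReal (g x) ∂μ := by
    rw [← lintegral_indicator measurableSet_Ioc]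
    have : ∀ n, ∫⁻ x in Set.Ioc (e n) K, ENNReal.ofReal (g x) ∂μ
        = ∫⁻ x, fn n x ∂μ := fun n => (lintegral_indicator measurableSet_Ioc _).symm
    simp_rw [this]
    rw [← lintegral_iSup hfn_meas hfn_mono]
    refine lintegral_congr fun x => (hfn_sup x).symm
  -- each truncated lintegral equals ofReal of a Bochner integral
  have hlog_int : ∀ n, IntegrableOn (fun x => Real.log x) (Set.Ioc (e n) K) μ := by
    intro n
    refine Integrable.mono' (integrable_const (|Real.log (e n)| + |Real.log K|))
      (Real.measurable_log.aestronglyMeasurable) ?_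
    filter_upwards [ae_restrict_mem measurableSet_Ioc] with x hx
    have h1 : Real.log (e n) ≤ Real.log x := Real.log_le_log (he_pos n) hx.1.le
    have h2 : Real.log x ≤ Real.log K := Real.log_le_log ((he_pos n).trans hx.1) hx.2
    rw [Real.norm_eq_abs, abs_le]
    constructor
    · have := neg_abs_le (Real.log (e n)); linarith [abs_nonneg (Real.log K)]
    · have := le_abs_self (Real.log K); linarith [abs_nonneg (Real.log (e n))]
  have hg_int : ∀ n, IntegrableOn g (Set.Ioc (e n) K) μ := fun n =>
    (integrable_const (Real.log K)).sub (hlog_int n)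
  set r : ℕ → ℝ := fun n => ∫ x in Set.Ioc (e n) K, g x ∂μ with hr_def
  have ha_eq : ∀ n, ∫⁻ x in Set.Ioc (e n) K, ENNReal.ofReal (g x) ∂μ
      = ENNReal.ofReal (r n) := by
    intro n
    rw [← ofReal_integral_eq_lintegral_ofReal (hg_int n) ?_]
    filter_upwards [ae_restrict_mem measurableSet_Ioc] with x hx
    have : Real.log x ≤ Real.log K := Real.log_le_log ((he_pos n).trans hx.1) hx.2
    simp only [Pi.zero_apply, hg_def]
    linarith
  -- the limit of r
  have he_tendsto : Tendsto e atTop (nhdsWithin 0 (Set.Ioi 0)) := by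
    apply tendsto_nhdsWithin_of_tendsto_nhds_of_eventually_within
    · exact tendsto_one_div_add_atTop_nhds_zero_nat
    · exact Filter.Eventually.of_forall fun n => he_pos n
  have hI_tendsto : Tendsto (fun n => ∫ x in Set.Ioc (e n) K, Real.log x ∂μ)
      atTop (nhds c) := hc.comp he_tendsto
  have hUnion : (⋃ n, Set.Ioc (e n) K) = Set.Ioc 0 K := by
    ext x
    simp only [Set.mem_iUnion, Set.mem_Ioc]
    constructor
    · rintro ⟨n, h1, h2⟩; exact ⟨(he_pos n).trans h1, h2⟩
    · rintro ⟨h1, h2⟩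
      obtain ⟨n, hn⟩ := exists_nat_one_div_lt h1
      exact ⟨n, hn, h2⟩
  have hμ_tendsto : Tendsto (fun n => μ (Set.Ioc (e n) K)) atTop
      (nhds (μ (Set.Ioc 0 K))) := by
    rw [← hUnion]
    apply tendsto_measure_iUnion_atTop
    intro n m hnm
    exact Set.Ioc_subset_Ioc_left (he_anti n m hnm)
  have hμ_tendsto' : Tendsto (fun n => (μ (Set.Ioc (e n) K)).toReal) atTop
      (nhds ((μ (Set.Ioc 0 K)).toReal)) :=
    (ENNReal.tendsto_toReal (measure_ne_top μ _)).comp hμ_tendsto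
  have hr_eq : ∀ n, r n = Real.log K * (μ (Set.Ioc (e n) K)).toReal
      - ∫ x in Set.Ioc (e n) K, Real.log x ∂μ := by
    intro n
    rw [hr_def]
    simp only [hg_def]
    rw [integral_sub (integrable_const _) (hlog_int n), setIntegral_const, smul_eq_mul,
      mul_comm]
    rfl
  set L : ℝ := Real.log K * (μ (Set.Ioc 0 K)).toReal - c with hL_def
  have hr_tendsto : Tendsto r atTop (nhds L) := by
    have hre : r = fun n => Real.log K * (μ (Set.Ioc (e n) K)).toReal
        - ∫ x in Set.Ioc (e n) K, Real.log x ∂μ := funext hr_eq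
    rw [hre]
    exact (hμ_tendsto'.const_mul (Real.log K)).sub hI_tendsto
  have ha_tendsto : Tendsto (fun n => ENNReal.ofReal (r n)) atTop
      (nhds (ENNReal.ofReal L)) :=
    (ENNReal.continuous_ofReal.tendsto L).comp hr_tendsto
  have ha_mono : Monotone (fun n => ENNReal.ofReal (r n)) := by
    intro n m hnm
    show ENNReal.ofReal (r n) ≤ ENNReal.ofReal (r m)
    rw [← ha_eq n, ← ha_eq m]
    have h1 : ∫⁻ x in Set.Ioc (e n) K, ENNReal.ofReal (g x) ∂μ = ∫⁻ x, fn n x ∂μ :=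
      (lintegral_indicator measurableSet_Ioc _).symm
    have h2 : ∫⁻ x in Set.Ioc (e m) K, ENNReal.ofReal (g x) ∂μ = ∫⁻ x, fn m x ∂μ :=
      (lintegral_indicator measurableSet_Ioc _).symm
    rw [h1, h2]
    exact lintegral_mono fun x => hfn_mono hnm x
  have hsup_eq : (⨆ n, ENNReal.ofReal (r n)) = ENNReal.ofReal L :=
    tendsto_nhds_unique (tendsto_atTop_iSup ha_mono) ha_tendsto
  calc ∫⁻ x in Set.Ioc 0 K, ENNReal.ofReal (g x) ∂μ
      = ⨆ n, ENNReal.ofReal (r n) := by rw [hmc]; exact iSup_congr ha_eq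
    _ = ENNReal.ofReal L := hsup_eq
    _ ≤ ENNReal.ofReal (Real.log K) := by
        apply ENNReal.ofReal_le_ofReal
        have hm1 : (μ (Set.Ioc 0 K)).toReal ≤ 1 := by
          rw [← ENNReal.toReal_one]
          exact ENNReal.toReal_mono ENNReal.one_ne_top prob_le_one
        have hlogK : 0 ≤ Real.log K := Real.log_nonneg hK
        nlinarith
end

section
/- Let A be an n × n symmetric positive semidefinite matrix with integer entries, and let λ₁, …, λ_n be its eigenvalues with multiplicity (all of which are nonnegative reals). Then ∑_{i : λᵢ > 0} log λᵢ ≥ 0. -/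
open Matrix Finset Polynomial

lemma aux_charpoly_conj {m : Type*} [DecidableEq m] [Fintype m] {R : Type*} [CommRing R]
    (U D V : Matrix m m R) (hUV : U * V = 1) :
    (U * D * V).charpoly = D.charpoly := by
  have hmapUV : (C : R →+* R[X]).mapMatrix U * (C : R →+* R[X]).mapMatrix V = 1 := by
    rw [← _root_.map_mul, hUV, _root_.map_one]
  have h1 : Matrix.charmatrix (U * D * V)
      = (C : R →+* R[X]).mapMatrix U * Matrix.charmatrix D * (C : R →+* R[X]).mapMatrix V := by
    simp only [Matrix.charmatrix, mul_sub, sub_mul, _root_.map_mul]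
    congr 1
    rw [mul_assoc, (Matrix.scalar_commute (X : R[X]) (fun r' => Commute.all _ _)
      ((C : R →+* R[X]).mapMatrix V)).eq, ← mul_assoc, hmapUV, one_mul]
  have hdet : ((C : R →+* R[X]).mapMatrix U).det * ((C : R →+* R[X]).mapMatrix V).det = 1 := by
    rw [← Matrix.det_mul, hmapUV, Matrix.det_one]
  unfold Matrix.charpoly
  rw [h1, Matrix.det_mul, Matrix.det_mul, mul_right_comm, hdet, one_mul]

lemma aux_charpoly_eig (n : ℕ) (A : Matrix (Fin n) (Fin n) ℝ) (hA : A.IsHermitian) :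
    A.charpoly = ∏ i : Fin n, (X - C (hA.eigenvalues i)) := by
  have hdiag : (Matrix.diagonal (RCLike.ofReal ∘ hA.eigenvalues) : Matrix (Fin n) (Fin n) ℝ)
      = Matrix.diagonal hA.eigenvalues := by
    congr 1
  conv_lhs => rw [hA.spectral_theorem]
  rw [Unitary.conjStarAlgAut_apply]
  rw [hdiag, aux_charpoly_conj _ _ _ (by
    simpa using (Unitary.mul_star_self (Matrix.IsHermitian.eigenvectorUnitary hA)))]
  rw [Matrix.charpoly_of_upperTriangular _ (Matrix.blockTriangular_diagonal _)]
  simp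

/-- If `A` is a symmetric positive semidefinite integer matrix, then the sum of the
logarithms of its positive eigenvalues (with multiplicity) is nonnegative. -/
theorem sum_log_pos_eigenvalues_nonneg
    (n : ℕ) (A : Matrix (Fin n) (Fin n) ℝ) (hA : A.PosSemidef)
    (hint : ∀ i j, ∃ z : ℤ, A i j = (z : ℝ)) :
    0 ≤ ∑ i ∈ Finset.univ.filter fun i => 0 < hA.isHermitian.eigenvalues i,
        Real.log (hA.isHermitian.eigenvalues i) := by
  set lam := hA.isHermitian.eigenvalues with hlam
  set P : Finset (Fin n) := Finset.univ.filter fun i => 0 < lam i with hP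
  set r : ℕ := P.card with hr
  have hrn : r ≤ n := by simpa using P.card_le_univ
  set e : ℝ := ∏ i ∈ P, lam i with he
  have hpos : 0 < e := Finset.prod_pos fun i hi => (Finset.mem_filter.mp hi).2
  -- the multiset of eigenvalues
  set s : Multiset ℝ := Finset.univ.val.map lam with hs
  have hcard : Multiset.card s = n := by simp [hs]
  -- esymm r equals the product of positive eigenvalues
  have hesymm : s.esymm r = e := by
    rw [hs, Finset.esymm_map_val]
    rw [Finset.sum_eq_single_of_mem P (by simp [Finset.mem_powersetCard, hr])]
    intro t ht hne
    have hcardt : t.card = r := (Finset.mem_powersetCard.mp ht).2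
    have hnots : ¬ t ⊆ P := fun hsub => hne (Finset.eq_of_subset_of_card_le hsub (by omega))
    obtain ⟨i, hit, hiP⟩ := Finset.not_subset.mp hnots
    have hzero : lam i = 0 := by
      have h1 : ¬ 0 < lam i := by simpa [hP] using hiP
      have h2 : 0 ≤ lam i := hA.eigenvalues_nonneg i
      linarith
    exact Finset.prod_eq_zero hit hzero
  -- the relevant charpoly coefficient
  have hcoeff : A.charpoly.coeff (n - r) = (-1) ^ r * e := by
    rw [aux_charpoly_eig n A hA.isHermitian]
    have : (∏ i : Fin n, (X - C (lam i))) = (s.map fun t => X - C t).prod := by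
      rw [hs, Multiset.map_map]; rfl
    rw [this, Multiset.prod_X_sub_C_coeff s (by omega), hcard,
      Nat.sub_sub_self hrn, hesymm]
  -- integrality
  choose B hB using hint
  have hAB : A = (Matrix.of B).map ⇑(Int.castRingHom ℝ) := by
    ext i j; exact hB i j
  have hmap : A.charpoly = ((Matrix.of B).charpoly).map (Int.castRingHom ℝ) := by
    rw [hAB, Matrix.charpoly_map]
  set z : ℤ := (Matrix.of B).charpoly.coeff (n - r) with hz
  have hze : ((z : ℝ)) = (-1) ^ r * e := by
    rw [← hcoeff, hmap, Polynomial.coeff_map]; rfl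
  set w : ℤ := (-1) ^ r * z with hw
  have hwe : ((w : ℝ)) = e := by
    push_cast [hw]
    rw [hze, ← mul_assoc, ← mul_pow]
    simp
  have hw1 : (1 : ℤ) ≤ w := by
    have : (0 : ℤ) < w := by exact_mod_cast (hwe ▸ hpos : (0:ℝ) < (w:ℝ))
    omega
  have hee : (1 : ℝ) ≤ e := by
    rw [← hwe]; exact_mod_cast hw1
  -- conclude
  have hlog : ∑ i ∈ P, Real.log (lam i) = Real.log e := by
    rw [he, Real.log_prod]
    intro i hi
    exact ne_of_gt (Finset.mem_filter.mp hi).2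
  calc (0:ℝ) ≤ Real.log e := Real.log_nonneg hee
    _ = _ := hlog.symm
end

section
/- Let L, M > 0 be integers and let (A_n) be a sequence of symmetric positive semidefinite integer matrices, where A_n has size m_n × m_n, every row and every column of A_n has at most L nonzero entries, and all entries satisfy |(A_n)_{ij}| ≤ M. Let μ_n := (1/m_n) ∑_{i=1}^{m_n} δ_{λᵢ(A_n)} be the normalized spectral measure of A_n, where λ₁(A_n), …, λ_{m_n}(A_n) are the eigenvalues of A_n with multiplicity. If (μ_n) converges weakly to a Borel probability measure μ on [0, 2LM], then lim_{n→∞} (dim ker A_n)/m_n = μ({0}). -/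
open MeasureTheory Filter Set Matrix
open scoped ENNReal

section AuxLemmas

open Polynomial

lemma my_charpoly_conj {n : ℕ} (U B V : Matrix (Fin n) (Fin n) ℝ) (hUV : U * V = 1)
    (hVU : V * U = 1) : (U * B * V).charpoly = B.charpoly := by
  have h1 : (C.mapMatrix U) * (C.mapMatrix V) = (1 : Matrix (Fin n) (Fin n) ℝ[X]) := by
    rw [← _root_.map_mul, hUV, _root_.map_one]
  have h1' : (C.mapMatrix V) * (C.mapMatrix U) = (1 : Matrix (Fin n) (Fin n) ℝ[X]) := by
    rw [← _root_.map_mul, hVU, _root_.map_one]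
  have hs : ∀ W : Matrix (Fin n) (Fin n) ℝ[X], scalar (Fin n) X * W = W * scalar (Fin n) X :=
    fun W => (Matrix.scalar_commute X (fun r => Commute.all X r) W).eq
  have h2 : charmatrix (U * B * V) = (C.mapMatrix U) * charmatrix B * (C.mapMatrix V) := by
    rw [charmatrix, charmatrix, _root_.map_mul, _root_.map_mul]
    rw [mul_sub, sub_mul]
    congr 1
    rw [← hs, mul_assoc, h1, mul_one]
  rw [Matrix.charpoly, Matrix.charpoly, h2, det_mul, det_mul, mul_comm, ← mul_assoc, ← det_mul,
    h1', det_one, one_mul]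

lemma my_charpoly_eq {n : ℕ} (A : Matrix (Fin n) (Fin n) ℝ) (hA : A.IsHermitian) :
    A.charpoly = ∏ i, (X - C (hA.eigenvalues i)) := by
  have hst := hA.spectral_theorem
  have hU : (hA.eigenvectorUnitary : Matrix (Fin n) (Fin n) ℝ) *
      star (hA.eigenvectorUnitary : Matrix (Fin n) (Fin n) ℝ) = 1 :=
    (Matrix.mem_unitaryGroup_iff).mp hA.eigenvectorUnitary.2
  have hU' : star (hA.eigenvectorUnitary : Matrix (Fin n) (Fin n) ℝ) *
      (hA.eigenvectorUnitary : Matrix (Fin n) (Fin n) ℝ) = 1 :=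
    (Matrix.mem_unitaryGroup_iff').mp hA.eigenvectorUnitary.2
  have : A.charpoly = (diagonal (RCLike.ofReal ∘ hA.eigenvalues) :
      Matrix (Fin n) (Fin n) ℝ).charpoly := by
    conv_lhs => rw [hst]
    exact my_charpoly_conj _ _ _ hU hU'
  rw [this]
  have hd : (diagonal (RCLike.ofReal ∘ hA.eigenvalues) : Matrix (Fin n) (Fin n) ℝ) =
      diagonal hA.eigenvalues := by
    simp [Function.comp]
  rw [hd, Matrix.charpoly_of_upperTriangular _ (Matrix.blockTriangular_diagonal _)]
  simp

lemma my_prod_nonzero_eigs_ge_one {n : ℕ} (A : Matrix (Fin n) (Fin n) ℝ) (hA : A.PosSemidef)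
    (hint : ∀ i j, ∃ z : ℤ, A i j = (z : ℝ)) :
    1 ≤ ∏ i ∈ Finset.univ.filter (fun i => hA.isHermitian.eigenvalues i ≠ 0),
        hA.isHermitian.eigenvalues i := by
  classical
  have hPpos : 0 < ∏ i ∈ Finset.univ.filter (fun i => hA.isHermitian.eigenvalues i ≠ 0),
      hA.isHermitian.eigenvalues i := Finset.prod_pos (fun i hi =>
    lt_of_le_of_ne (hA.eigenvalues_nonneg i) (Ne.symm (Finset.mem_filter.mp hi).2))
  let B : Matrix (Fin n) (Fin n) ℤ := fun i j => (hint i j).choose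
  have hAB : B.map ⇑(Int.castRingHom ℝ) = A := by
    ext i j
    exact ((hint i j).choose_spec).symm
  have hch : A.charpoly = (B.charpoly).map (Int.castRingHom ℝ) := by
    rw [← hAB, Matrix.charpoly_map]
  have hfac : A.charpoly = X ^ (Finset.univ.filter
        (fun i => hA.isHermitian.eigenvalues i = 0)).card *
      ∏ i ∈ Finset.univ.filter (fun i => hA.isHermitian.eigenvalues i ≠ 0),
        (X - C (hA.isHermitian.eigenvalues i)) := by
    rw [my_charpoly_eq A hA.isHermitian,
      ← Finset.prod_filter_mul_prod_filter_not Finset.univ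
        (fun i => hA.isHermitian.eigenvalues i = 0)]
    congr 1
    rw [Finset.prod_congr rfl ((fun i hi => by
      rw [(Finset.mem_filter.mp hi).2, map_zero, sub_zero]) :
      ∀ i ∈ Finset.univ.filter (fun i => hA.isHermitian.eigenvalues i = 0),
        (X - C (hA.isHermitian.eigenvalues i)) = X), Finset.prod_const]
  have hcoeff : A.charpoly.coeff (Finset.univ.filter
        (fun i => hA.isHermitian.eigenvalues i = 0)).card =
      (-1) ^ (Finset.univ.filter (fun i => hA.isHermitian.eigenvalues i ≠ 0)).card *
      ∏ i ∈ Finset.univ.filter (fun i => hA.isHermitian.eigenvalues i ≠ 0),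
        hA.isHermitian.eigenvalues i := by
    rw [hfac]
    have h0 := Polynomial.coeff_X_pow_mul (∏ i ∈ Finset.univ.filter
        (fun i => hA.isHermitian.eigenvalues i ≠ 0), (X - C (hA.isHermitian.eigenvalues i)))
      (Finset.univ.filter (fun i => hA.isHermitian.eigenvalues i = 0)).card 0
    rw [zero_add] at h0
    rw [h0, Polynomial.coeff_zero_eq_eval_zero, Polynomial.eval_prod]
    simp only [eval_sub, eval_X, eval_C, zero_sub]
    rw [← Finset.prod_const (-1 : ℝ), ← Finset.prod_mul_distrib]
    simp [neg_one_mul]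
  set z : ℤ := B.charpoly.coeff (Finset.univ.filter
      (fun i => hA.isHermitian.eigenvalues i = 0)).card with hz
  have hzc : (z : ℝ) = A.charpoly.coeff (Finset.univ.filter
      (fun i => hA.isHermitian.eigenvalues i = 0)).card := by
    rw [hch, Polynomial.coeff_map]
    rfl
  have hzne : z ≠ 0 := by
    intro h
    rw [h] at hzc
    rw [hcoeff] at hzc
    have := hPpos.ne'
    have h2 : ((-1 : ℝ)) ^ (Finset.univ.filter
        (fun i => hA.isHermitian.eigenvalues i ≠ 0)).card ≠ 0 := by positivity
    simp only [Int.cast_zero] at hzc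
    exact (mul_ne_zero h2 this) hzc.symm
  have habs : (1 : ℝ) ≤ |(z : ℝ)| := by
    rw [← Int.cast_abs]
    exact_mod_cast Int.one_le_abs hzne
  rw [hzc, hcoeff, abs_mul, abs_pow, abs_neg, abs_one, one_pow, one_mul,
    abs_of_pos hPpos] at habs
  exact habs

lemma my_eig_bound {n L M : ℕ} (A : Matrix (Fin n) (Fin n) ℝ) (hA : A.IsHermitian)
    (hrow : ∀ i, (Finset.univ.filter fun j => A i j ≠ 0).card ≤ L)
    (hent : ∀ i j, |A i j| ≤ (M : ℝ)) (i : Fin n) :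
    hA.eigenvalues i ≤ (L : ℝ) * (M : ℝ) := by
  classical
  set v : Fin n → ℝ := ⇑(hA.eigenvectorBasis i) with hv
  have hvne : v ≠ 0 := by
    have := hA.eigenvectorBasis.orthonormal.ne_zero i
    intro h
    apply this
    ext j
    exact congrFun h j
  have hne : (Finset.univ : Finset (Fin n)).Nonempty := by
    rcases Function.ne_iff.mp hvne with ⟨j, _⟩
    exact ⟨j, Finset.mem_univ j⟩
  obtain ⟨j, -, hj⟩ := Finset.exists_max_image Finset.univ (fun j => |v j|) hne
  have hvj : 0 < |v j| := by
    rcases Function.ne_iff.mp hvne with ⟨j', hj'⟩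
    have : (0:ℝ) < |v j'| := abs_pos.mpr (by simpa using hj')
    exact lt_of_lt_of_le this (hj j' (Finset.mem_univ _))
  have hmv := hA.mulVec_eigenvectorBasis i
  have hrow_eq : (A *ᵥ v) j = hA.eigenvalues i * v j := by
    rw [← hv] at hmv
    rw [hmv]
    simp
  have key : hA.eigenvalues i * |v j| ≤ (L : ℝ) * (M : ℝ) * |v j| := by
    calc hA.eigenvalues i * |v j| ≤ |hA.eigenvalues i * v j| := by
          rw [abs_mul]
          exact mul_le_mul_of_nonneg_right (le_abs_self _) (abs_nonneg _)
      _ = |∑ k, A j k * v k| := by rw [← hrow_eq]; rfl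
      _ ≤ ∑ k, |A j k * v k| := Finset.abs_sum_le_sum_abs _ _
      _ = ∑ k ∈ Finset.univ.filter (fun k => A j k ≠ 0), |A j k * v k| := by
          rw [Finset.sum_filter_of_ne]
          intro k _ h
          intro h0
          apply h
          rw [h0]
          simp [abs_mul]
      _ ≤ ∑ k ∈ Finset.univ.filter (fun k => A j k ≠ 0), (M : ℝ) * |v j| := by
          apply Finset.sum_le_sum
          intro k _
          rw [abs_mul]
          exact mul_le_mul (hent j k) (hj k (Finset.mem_univ k)) (abs_nonneg _)
            (Nat.cast_nonneg M)
      _ = (Finset.univ.filter (fun k => A j k ≠ 0)).card * ((M : ℝ) * |v j|) := by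
          rw [Finset.sum_const, nsmul_eq_mul]
      _ ≤ (L : ℝ) * ((M : ℝ) * |v j|) := by
          apply mul_le_mul_of_nonneg_right _ (by positivity)
          exact_mod_cast hrow j
      _ = (L : ℝ) * (M : ℝ) * |v j| := by ring
  exact le_of_mul_le_mul_right key hvj

lemma my_count_bound {n : ℕ} (lam : Fin n → ℝ) (hnn : ∀ i, 0 ≤ lam i) (C : ℝ) (hC : 1 < C)
    (hub : ∀ i, lam i ≤ C)
    (hprod : 1 ≤ ∏ i ∈ Finset.univ.filter (fun i => lam i ≠ 0), lam i) (K : ℕ) :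
    K * (Finset.univ.filter (fun i => lam i ≠ 0 ∧ lam i < C ^ (-(K : ℤ)))).card ≤ n := by
  classical
  have hC0 : (0:ℝ) < C := lt_trans one_pos hC
  set ε : ℝ := C ^ (-(K : ℤ)) with hε
  have hε0 : 0 < ε := zpow_pos hC0 _
  set s := Finset.univ.filter (fun i => lam i ≠ 0) with hsdef
  set t := Finset.univ.filter (fun i => lam i ≠ 0 ∧ lam i < ε) with htdef
  have hts : t ⊆ s := by
    intro i hi
    rw [htdef, Finset.mem_filter] at hi
    rw [hsdef, Finset.mem_filter]
    exact ⟨hi.1, hi.2.1⟩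
  have hsplit : ∏ i ∈ s, lam i = (∏ i ∈ t, lam i) * ∏ i ∈ s \ t, lam i := by
    rw [← Finset.prod_union (Finset.disjoint_sdiff), Finset.union_sdiff_of_subset hts]
  have h1 : ∏ i ∈ t, lam i ≤ ε ^ t.card := by
    rw [← Finset.prod_const]
    exact Finset.prod_le_prod (fun i _ => hnn i)
      (fun i hi => le_of_lt (Finset.mem_filter.mp (htdef ▸ hi)).2.2)
  have h2 : ∏ i ∈ s \ t, lam i ≤ C ^ n := by
    calc ∏ i ∈ s \ t, lam i ≤ ∏ _i ∈ s \ t, C := Finset.prod_le_prod (fun i _ => hnn i)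
          (fun i _ => hub i)
      _ = C ^ (s \ t).card := Finset.prod_const C
      _ ≤ C ^ n := pow_le_pow_right₀ (le_of_lt hC) (le_trans (Finset.card_le_card
          (Finset.sdiff_subset)) (by simpa using Finset.card_le_univ s))
  have h3 : (1:ℝ) ≤ ε ^ t.card * C ^ n := by
    calc (1:ℝ) ≤ ∏ i ∈ s, lam i := hprod
      _ = (∏ i ∈ t, lam i) * ∏ i ∈ s \ t, lam i := hsplit
      _ ≤ ε ^ t.card * C ^ n := by
          apply mul_le_mul h1 h2 (Finset.prod_nonneg (fun i _ => hnn i))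
            (le_of_lt (pow_pos hε0 _))
  have h4 : (1:ℝ) ≤ C ^ ((-(K:ℤ)) * t.card + n) := by
    rw [zpow_add₀ (ne_of_gt hC0)]
    calc (1:ℝ) ≤ ε ^ t.card * C ^ n := h3
      _ = C ^ ((-(K:ℤ)) * t.card) * C ^ (n:ℤ) := by
          rw [hε, ← zpow_natCast (C ^ (-(K:ℤ))) t.card, ← _root_.zpow_mul, zpow_natCast C n]
  have h5 : (0:ℤ) ≤ (-(K:ℤ)) * t.card + n := by
    have := (zpow_le_zpow_iff_right₀ hC (m := 0) (n := (-(K:ℤ)) * t.card + n)).mp (by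
      simpa using h4)
    exact this
  have : (K:ℤ) * t.card ≤ n := by linarith
  exact_mod_cast this

end AuxLemmas

/-- The normalized spectral measure of a real symmetric `m × m` matrix: the average of the
Dirac measures at its eigenvalues (with multiplicity). -/
noncomputable def normalizedSpectralMeasure {m : ℕ} (A : Matrix (Fin m) (Fin m) ℝ)
    (hA : A.IsHermitian) : Measure ℝ :=
  ((m : ℝ≥0∞))⁻¹ • ∑ i : Fin m, Measure.dirac (hA.eigenvalues i)

section AuxLemmas2

lemma my_finrank_ker {n : ℕ} (A : Matrix (Fin n) (Fin n) ℝ) (hA : A.IsHermitian) :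
    Module.finrank ℝ ↥(LinearMap.ker A.mulVecLin)
      = (Finset.univ.filter (fun i => hA.eigenvalues i = 0)).card := by
  classical
  have h1 : A.rank = Fintype.card {i // hA.eigenvalues i ≠ 0} := hA.rank_eq_card_non_zero_eigs
  have h2 : A.rank + Module.finrank ℝ ↥(LinearMap.ker A.mulVecLin) = n := by
    rw [Matrix.rank]
    have := LinearMap.finrank_range_add_finrank_ker A.mulVecLin
    simpa using this
  have h3 : Fintype.card {i // hA.eigenvalues i ≠ 0}
      = (Finset.univ.filter (fun i => hA.eigenvalues i ≠ 0)).card := Fintype.card_subtype _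
  have h4 : (Finset.univ.filter (fun i => hA.eigenvalues i ≠ 0)).card
      + (Finset.univ.filter (fun i => hA.eigenvalues i = 0)).card = n := by
    rw [add_comm, Finset.card_filter_add_card_filter_not (fun i => hA.eigenvalues i = 0)]
    simp
  omega

lemma my_setIntegral_nsm {n : ℕ} (A : Matrix (Fin n) (Fin n) ℝ) (hA : A.IsHermitian)
    (f : ℝ → ℝ) (T : Set ℝ) (hmem : ∀ i, hA.eigenvalues i ∈ T) :
    ∫ x in T, f x ∂(normalizedSpectralMeasure A hA) = (∑ i, f (hA.eigenvalues i)) / n := by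
  classical
  have hres : (∑ i : Fin n, Measure.dirac (hA.eigenvalues i)).restrict T
      = ∑ i : Fin n, Measure.dirac (hA.eigenvalues i) := by
    have key : ∀ (s : Finset (Fin n)), (∑ i ∈ s, Measure.dirac (hA.eigenvalues i)).restrict T
        = ∑ i ∈ s, Measure.dirac (hA.eigenvalues i) := by
      intro s
      induction s using Finset.induction with
      | empty => simp
      | @insert a s h ih =>
        rw [Finset.sum_insert h, Measure.restrict_add, ih, MeasureTheory.restrict_dirac]
        rw [if_pos (hmem _)]
    exact key Finset.univ
  have hintg : ∀ (a : ℝ), Integrable f (Measure.dirac a) := by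
    intro a
    have hae : f =ᵐ[Measure.dirac a] (fun _ => f a) := by
      rw [MeasureTheory.ae_dirac_eq]
      exact Filter.eventually_pure.mpr rfl
    exact (integrable_const (f a)).congr hae.symm
  rw [normalizedSpectralMeasure, Measure.restrict_smul, integral_smul_measure, hres,
    integral_finset_sum_measure (fun i _ => hintg _)]
  simp only [integral_dirac]
  rw [ENNReal.toReal_inv, ENNReal.toReal_natCast, smul_eq_mul, inv_mul_eq_div]

noncomputable def myf (ε : ℝ) (x : ℝ) : ℝ := max 0 (1 - x / ε)

lemma myf_cont (ε : ℝ) : Continuous (myf ε) := by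
  unfold myf
  fun_prop

lemma myf_zero (ε : ℝ) : myf ε 0 = 1 := by simp [myf]

lemma myf_nonneg (ε x : ℝ) : 0 ≤ myf ε x := le_max_left _ _

lemma myf_le_one (ε x : ℝ) (hε : 0 < ε) (hx : 0 ≤ x) : myf ε x ≤ 1 := by
  unfold myf
  rw [max_le_iff]
  constructor
  · norm_num
  · have : 0 ≤ x / ε := div_nonneg hx hε.le
    linarith

lemma myf_eq_zero (ε x : ℝ) (hε : 0 < ε) (hx : ε ≤ x) : myf ε x = 0 := by
  unfold myf
  rw [max_eq_left_iff]
  have : 1 ≤ x / ε := (one_le_div hε).mpr hx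
  linarith

lemma my_mu_lower (μ : Measure ℝ) [IsProbabilityMeasure μ] (C' ε : ℝ) (hC' : 0 ≤ C')
    (hε : 0 < ε) :
    (μ {0}).toReal ≤ ∫ x in Icc 0 C', myf ε x ∂μ := by
  have hfint : IntegrableOn (myf ε) (Icc 0 C') μ :=
    (myf_cont ε).continuousOn.integrableOn_compact isCompact_Icc
  have hgint : IntegrableOn (({0} : Set ℝ).indicator (fun _ => (1:ℝ))) (Icc 0 C') μ :=
    ((integrable_const (1:ℝ)).indicator (measurableSet_singleton 0)).integrableOn
  have hmono : ∀ x ∈ Icc 0 C', ({0} : Set ℝ).indicator (fun _ => (1:ℝ)) x ≤ myf ε x := by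
    intro x hx
    by_cases h : x = 0
    · subst h
      rw [Set.indicator_of_mem (Set.mem_singleton 0), myf_zero]
    · rw [Set.indicator_of_notMem (by simpa using h)]
      exact myf_nonneg ε x
  have h1 : ∫ x in Icc 0 C', ({0} : Set ℝ).indicator (fun _ => (1:ℝ)) x ∂μ
      = (μ {0}).toReal := by
    rw [setIntegral_indicator (measurableSet_singleton 0), setIntegral_const]
    rw [Set.inter_eq_right.mpr (by simp [hC'] : ({0} : Set ℝ) ⊆ Icc 0 C')]
    simp [Measure.real]
  rw [← h1]
  exact setIntegral_mono_on hgint hfint measurableSet_Icc hmono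

lemma my_mu_upper (μ : Measure ℝ) [IsProbabilityMeasure μ] (C' ε : ℝ) (hε : 0 < ε) :
    ∫ x in Icc 0 C', myf ε x ∂μ ≤ (μ (Ico 0 ε)).toReal := by
  have hfint : IntegrableOn (myf ε) (Icc 0 C') μ :=
    (myf_cont ε).continuousOn.integrableOn_compact isCompact_Icc
  have hgint : IntegrableOn ((Ico (0:ℝ) ε).indicator (fun _ => (1:ℝ))) (Icc 0 C') μ :=
    ((integrable_const (1:ℝ)).indicator measurableSet_Ico).integrableOn
  have hmono : ∀ x ∈ Icc 0 C', myf ε x ≤ (Ico (0:ℝ) ε).indicator (fun _ => (1:ℝ)) x := by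
    intro x hx
    by_cases h : x < ε
    · rw [Set.indicator_of_mem (by exact ⟨hx.1, h⟩)]
      exact myf_le_one ε x hε hx.1
    · rw [Set.indicator_of_notMem (by simp [h, hx.1])]
      rw [myf_eq_zero ε x hε (not_lt.mp h)]
  calc ∫ x in Icc 0 C', myf ε x ∂μ
      ≤ ∫ x in Icc 0 C', (Ico (0:ℝ) ε).indicator (fun _ => (1:ℝ)) x ∂μ :=
        setIntegral_mono_on hfint hgint measurableSet_Icc hmono
    _ = (μ (Icc 0 C' ∩ Ico 0 ε)).toReal := by
        rw [setIntegral_indicator measurableSet_Ico, setIntegral_const]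
        simp [Measure.real]
    _ ≤ (μ (Ico 0 ε)).toReal :=
        ENNReal.toReal_mono (measure_ne_top μ _) (measure_mono Set.inter_subset_right)

lemma my_mu_tendsto (μ : Measure ℝ) [IsProbabilityMeasure μ] (C' : ℝ) (hC' : 1 < C') :
    Tendsto (fun K : ℕ => (μ (Ico 0 ((C'⁻¹) ^ K))).toReal) atTop
      (nhds ((μ ({0} : Set ℝ)).toReal)) := by
  have hC0 : (0:ℝ) < C' := lt_trans one_pos hC'
  have hi0 : 0 < C'⁻¹ := inv_pos.mpr hC0
  have hi1 : C'⁻¹ < 1 := inv_lt_one_of_one_lt₀ hC'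
  have htz : Tendsto (fun K : ℕ => (C'⁻¹) ^ K) atTop (nhds 0) :=
    tendsto_pow_atTop_nhds_zero_of_lt_one hi0.le hi1
  have hanti : Antitone (fun K : ℕ => Ico (0:ℝ) ((C'⁻¹) ^ K)) := by
    intro K K' h
    exact Ico_subset_Ico_right (pow_le_pow_of_le_one hi0.le hi1.le h)
  have hiInter : ⋂ K : ℕ, Ico (0:ℝ) ((C'⁻¹) ^ K) = {0} := by
    ext x
    simp only [mem_iInter, mem_Ico, mem_singleton_iff]
    constructor
    · intro h
      have hx0 : 0 ≤ x := (h 0).1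
      have hxle : x ≤ 0 := by
        refine ge_of_tendsto htz (Filter.Eventually.of_forall (fun K => (h K).2.le))
      linarith
    · rintro rfl
      exact fun K => ⟨le_refl 0, pow_pos hi0 K⟩
  have hmeas : Tendsto (fun K : ℕ => μ (Ico (0:ℝ) ((C'⁻¹) ^ K))) atTop (nhds (μ {0})) := by
    have := tendsto_measure_iInter_atTop (μ := μ)
      (s := fun K : ℕ => Ico (0:ℝ) ((C'⁻¹) ^ K))
      (fun K => measurableSet_Ico.nullMeasurableSet) hanti ⟨0, measure_ne_top μ _⟩
    rwa [hiInter] at this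
  exact (ENNReal.tendsto_toReal (measure_ne_top μ _)).comp hmeas

lemma my_sum_lower {n : ℕ} (lam : Fin n → ℝ) (ε : ℝ) :
    ((Finset.univ.filter (fun i => lam i = 0)).card : ℝ) ≤ ∑ i, myf ε (lam i) := by
  classical
  calc ((Finset.univ.filter (fun i => lam i = 0)).card : ℝ)
      = ∑ i ∈ Finset.univ.filter (fun i => lam i = 0), myf ε (lam i) := by
        rw [Finset.sum_congr rfl (fun i hi => by
          rw [(Finset.mem_filter.mp hi).2, myf_zero]), Finset.sum_const]
        simp
    _ ≤ ∑ i, myf ε (lam i) :=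
        Finset.sum_le_sum_of_subset_of_nonneg (Finset.filter_subset _ _)
          (fun i _ _ => myf_nonneg ε (lam i))

lemma my_sum_upper {n : ℕ} (lam : Fin n → ℝ) (hnn : ∀ i, 0 ≤ lam i) (ε : ℝ) (hε : 0 < ε) :
    ∑ i, myf ε (lam i) ≤ ((Finset.univ.filter (fun i => lam i = 0)).card : ℝ)
      + ((Finset.univ.filter (fun i => lam i ≠ 0 ∧ lam i < ε)).card : ℝ) := by
  classical
  rw [← Finset.sum_filter_add_sum_filter_not Finset.univ (fun i => lam i = 0)]
  apply add_le_add
  · rw [Finset.sum_congr rfl (fun i hi => by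
      rw [(Finset.mem_filter.mp hi).2, myf_zero]), Finset.sum_const]
    simp
  · calc ∑ i ∈ Finset.univ.filter (fun i => ¬lam i = 0), myf ε (lam i)
        ≤ ∑ i ∈ Finset.univ.filter (fun i => ¬lam i = 0),
            (if lam i < ε then (1:ℝ) else 0) := by
          apply Finset.sum_le_sum
          intro i hi
          by_cases h : lam i < ε
          · rw [if_pos h]
            exact myf_le_one ε (lam i) hε (hnn i)
          · rw [if_neg h, myf_eq_zero ε (lam i) hε (not_lt.mp h)]
      _ = ((Finset.univ.filter (fun i => lam i ≠ 0 ∧ lam i < ε)).card : ℝ) := by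
          rw [Finset.sum_boole, Finset.filter_filter]

end AuxLemmas2

/-- Let `(A n)` be symmetric positive semidefinite integer matrices of size `m n`, with at
most `L` nonzero entries in each row and column and all entries bounded by `M` in absolute
value. If their normalized spectral measures converge weakly to a probability measure `μ`
on `[0, 2LM]`, then the normalized kernel dimensions converge to `μ({0})`. -/
theorem normalized_kernel_dim_tendsto_atom
    (L M : ℕ) (hL : 0 < L) (hM : 0 < M)
    (m : ℕ → ℕ) (hm : ∀ n, 0 < m n)
    (A : ∀ n, Matrix (Fin (m n)) (Fin (m n)) ℝ)
    (hpsd : ∀ n, (A n).PosSemidef)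
    (hint : ∀ n i j, ∃ z : ℤ, A n i j = (z : ℝ))
    (hrow : ∀ n i, (Finset.univ.filter fun j => A n i j ≠ 0).card ≤ L)
    (hcol : ∀ n j, (Finset.univ.filter fun i => A n i j ≠ 0).card ≤ L)
    (hent : ∀ n i j, |A n i j| ≤ (M : ℝ))
    (μ : Measure ℝ) (hμprob : IsProbabilityMeasure μ)
    (hμsupp : μ (Set.Icc 0 (2 * (L : ℝ) * (M : ℝ)))ᶜ = 0)
    (hweak : ∀ f : ℝ → ℝ, ContinuousOn f (Set.Icc 0 (2 * (L : ℝ) * (M : ℝ))) →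
      Filter.Tendsto
        (fun n => ∫ x in Set.Icc 0 (2 * (L : ℝ) * (M : ℝ)), f x
          ∂(normalizedSpectralMeasure (A n) (hpsd n).isHermitian))
        Filter.atTop
        (nhds (∫ x in Set.Icc 0 (2 * (L : ℝ) * (M : ℝ)), f x ∂μ))) :
    Filter.Tendsto
      (fun n => (Module.finrank ℝ ↥(LinearMap.ker (A n).mulVecLin) : ℝ) / (m n : ℝ))
      Filter.atTop (nhds ((μ {0}).toReal)) := by
  classical
  have hL1 : (1:ℝ) ≤ L := by exact_mod_cast hL
  have hM1 : (1:ℝ) ≤ M := by exact_mod_cast hM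
  set C' : ℝ := 2 * (L : ℝ) * (M : ℝ) with hC'def
  have hC'1 : 1 < C' := by nlinarith
  have hC'0 : (0:ℝ) < C' := lt_trans one_pos hC'1
  have hlam0 : ∀ n i, 0 ≤ (hpsd n).isHermitian.eigenvalues i :=
    fun n i => (hpsd n).eigenvalues_nonneg i
  have hlamC : ∀ n i, (hpsd n).isHermitian.eigenvalues i ≤ C' := by
    intro n i
    have h1 := my_eig_bound (A n) (hpsd n).isHermitian (hrow n) (hent n) i
    have hL0 : (0:ℝ) ≤ L := Nat.cast_nonneg L
    have hM0 : (0:ℝ) ≤ M := Nat.cast_nonneg M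
    nlinarith
  have hmem : ∀ n i, (hpsd n).isHermitian.eigenvalues i ∈ Icc 0 C' :=
    fun n i => ⟨hlam0 n i, hlamC n i⟩
  have hker : ∀ n, (Module.finrank ℝ ↥(LinearMap.ker (A n).mulVecLin) : ℝ)
      = ((Finset.univ.filter
          (fun i => (hpsd n).isHermitian.eigenvalues i = 0)).card : ℝ) := by
    intro n
    exact_mod_cast congrArg Nat.cast (my_finrank_ker (A n) (hpsd n).isHermitian)
  have hprod : ∀ n, 1 ≤ ∏ i ∈ Finset.univ.filter
      (fun i => (hpsd n).isHermitian.eigenvalues i ≠ 0), (hpsd n).isHermitian.eigenvalues i :=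
    fun n => my_prod_nonzero_eigs_ge_one (A n) (hpsd n) (hint n)
  rw [Metric.tendsto_atTop]
  intro δ hδ
  -- choose K
  have h2 := my_mu_tendsto μ C' hC'1
  have h1 : Tendsto (fun K : ℕ => 1 / (K:ℝ)) atTop (nhds 0) :=
    tendsto_one_div_atTop_nhds_zero_nat
  have hev1 : ∀ᶠ K : ℕ in atTop, 1 / (K:ℝ) < δ/3 :=
    h1.eventually_lt_const (by linarith)
  have hev2 : ∀ᶠ K : ℕ in atTop,
      (μ (Ico 0 ((C'⁻¹) ^ K))).toReal < (μ ({0} : Set ℝ)).toReal + δ/3 :=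
    h2.eventually_lt_const (by linarith)
  obtain ⟨K, ⟨hK1, hK2⟩, hK3⟩ := ((hev1.and hev2).and (eventually_ge_atTop 1)).exists
  set ε : ℝ := (C'⁻¹) ^ K with hεdef
  have hεzpow : C' ^ (-(K:ℤ)) = ε := by
    rw [hεdef, inv_pow, ← zpow_natCast C' K, ← _root_.zpow_neg]
  have hε0 : 0 < ε := pow_pos (inv_pos.mpr hC'0) K
  have hK0 : (0:ℝ) < K := by exact_mod_cast hK3
  -- use weak convergence with the test function
  have hW := hweak (myf ε) (myf_cont ε).continuousOn
  rw [Metric.tendsto_atTop] at hW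
  obtain ⟨N, hN⟩ := hW (δ/3) (by linarith)
  refine ⟨N, fun n hn => ?_⟩
  have hdist := hN n hn
  rw [Real.dist_eq] at hdist ⊢
  set lam := (hpsd n).isHermitian.eigenvalues with hlamdef
  set k : ℕ := (Finset.univ.filter (fun i => lam i = 0)).card with hkdef
  set t : ℕ := (Finset.univ.filter (fun i => lam i ≠ 0 ∧ lam i < ε)).card with htdef
  have hmn : (0:ℝ) < m n := by exact_mod_cast hm n
  have hInEq : ∫ x in Icc 0 C', myf ε x
      ∂(normalizedSpectralMeasure (A n) (hpsd n).isHermitian)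
      = (∑ i, myf ε (lam i)) / (m n) :=
    my_setIntegral_nsm (A n) (hpsd n).isHermitian (myf ε) (Icc 0 C') (hmem n)
  have hcnt : K * t ≤ m n := by
    have := my_count_bound lam (hlam0 n) C' hC'1 (hlamC n) (hprod n) K
    rwa [hεzpow] at this
  have htm : (t:ℝ) / (m n) ≤ 1 / K := by
    rw [div_le_div_iff₀ hmn hK0]
    have : ((K * t : ℕ) : ℝ) ≤ ((m n : ℕ) : ℝ) := by exact_mod_cast hcnt
    push_cast at this
    nlinarith
  have hl := my_sum_lower lam ε
  have hu := my_sum_upper lam (hlam0 n) ε hε0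
  have hIn1 : (k:ℝ)/(m n) ≤ (∑ i, myf ε (lam i)) / (m n) := by
    gcongr
  have hIn2 : (∑ i, myf ε (lam i)) / (m n) ≤ (k:ℝ)/(m n) + (t:ℝ)/(m n) := by
    rw [← add_div]
    gcongr
  have hmu1 := my_mu_lower μ C' ε (le_of_lt hC'0) hε0
  have hmu2 := my_mu_upper μ C' ε hε0
  have habs := abs_sub_lt_iff.mp hdist
  rw [hInEq] at habs
  rw [hker n]
  rw [abs_sub_lt_iff]
  constructor
  · -- k/mn - mu0 < δ
    have : (k:ℝ)/(m n) ≤ ∫ x in Icc 0 C', myf ε x ∂μ + δ/3 := by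
      calc (k:ℝ)/(m n) ≤ (∑ i, myf ε (lam i)) / (m n) := hIn1
        _ ≤ ∫ x in Icc 0 C', myf ε x ∂μ + δ/3 := by linarith [habs.1]
    have h5 : ∫ x in Icc 0 C', myf ε x ∂μ < (μ ({0} : Set ℝ)).toReal + δ/3 :=
      lt_of_le_of_lt hmu2 hK2
    linarith
  · -- mu0 - k/mn < δ
    have h6 : (μ ({0} : Set ℝ)).toReal ≤ ∫ x in Icc 0 C', myf ε x ∂μ := hmu1
    have h7 : ∫ x in Icc 0 C', myf ε x ∂μ
        < (∑ i, myf ε (lam i)) / (m n) + δ/3 := by linarith [habs.2]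
    have h8 : (∑ i, myf ε (lam i)) / (m n) ≤ (k:ℝ)/(m n) + δ/3 := by
      calc (∑ i, myf ε (lam i)) / (m n) ≤ (k:ℝ)/(m n) + (t:ℝ)/(m n) := hIn2
        _ ≤ (k:ℝ)/(m n) + 1/K := by linarith
        _ ≤ (k:ℝ)/(m n) + δ/3 := by linarith
    linarith
end
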